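/- arXiv:2404.13117 — 8 statements merged into one kernel-verified Lean document; each statement's English description precedes it below -/
import Mathlib

section
/- For every t ≥ 0, the function x ↦ F*(t,x) is a cumulative distribution function on ℝ: it is continuous and nondecreasing in x, with lim_{x→−∞} F*(t,x) = 0 and lim_{x→+∞} F*(t,x) = 1. -/
open MeasureTheory Filter Set
open scoped ENNReal

/-- For each `t ≥ 0`, `x ↦ F*(t,x)` is a cumulative distribution function:
continuous, nondecreasing, tending to `0` at `-∞` and to `1` at `+∞`. -/
theorem Fstar_is_cdf
    (β γ : ℝ) (hβ : 0 < β) (hβγ : β ≤ γ)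
    (θ : ℝ → ℝ) (hθmeas : Measurable θ) (hθnonneg : ∀ s, 0 ≤ θ s)
    (hθloc : ∀ t : ℝ, IntegrableOn θ (Set.Icc 0 t))
    (Θ : ℝ → ℝ) (hΘ : ∀ t, Θ t = ∫ s in (0:ℝ)..t, θ s)
    (ζ : ℝ → ℝ → ℝ)
    (hζ : ∀ x t, ζ x t = x + γ⁻¹ * Θ t
      - β⁻¹ * Real.log (1 + ∫ s in (0:ℝ)..t, Real.exp (β * γ⁻¹ * Θ s)))
    (F : ℝ → ℝ → ℝ)
    (hF : ∀ t x, F t x = (γ / Real.Gamma (1 + γ / β))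
      * ∫ y in Set.Iic (ζ x t), Real.exp (-γ * y - Real.exp (-β * y)))
    (t : ℝ) (ht : 0 ≤ t) :
    Continuous (fun x => F t x) ∧ Monotone (fun x => F t x) ∧
      Tendsto (fun x => F t x) atBot (nhds 0) ∧
      Tendsto (fun x => F t x) atTop (nhds 1) := by
  have hγ : 0 < γ := lt_of_lt_of_le hβ hβγ
  set g : ℝ → ℝ := fun y => Real.exp (-γ * y - Real.exp (-β * y)) with hg
  set s : ℝ := γ / β with hs
  have hspos : 0 < s := div_pos hγ hβ
  -- the substitution map
  set f : ℝ → ℝ := fun y => Real.exp (-β * y) with hf0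
  have hf' : ∀ y : ℝ, HasDerivAt f (-β * Real.exp (-β * y)) y := by
    intro y
    have h1 : HasDerivAt (fun y : ℝ => -β * y) (-β) y := by
      simpa using (hasDerivAt_id y).const_mul (-β)
    have h2 := (Real.hasDerivAt_exp (-β * y)).comp y h1
    rw [mul_comm (Real.exp (-β * y)) (-β)] at h2
    exact h2
  have hinj : InjOn f univ := by
    have : StrictAnti f := fun a b hab =>
      Real.exp_lt_exp.mpr (by nlinarith)
    exact this.injective.injOn
  have himg : f '' univ = Ioi (0:ℝ) := by
    rw [image_univ]
    ext u
    constructor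
    · rintro ⟨y, rfl⟩; exact Real.exp_pos _
    · intro hu
      refine ⟨-(Real.log u) / β, ?_⟩
      have : -β * (-(Real.log u) / β) = Real.log u := by
        field_simp
      simp only [hf0, this, Real.exp_log hu]
  -- the key pointwise identity
  have hpoint : ∀ y : ℝ,
      |(-β * Real.exp (-β * y))| • (Real.exp (-(f y)) * (f y) ^ (s - 1)) = β * g y := by
    intro y
    have h1 : |(-β * Real.exp (-β * y))| = β * Real.exp (-β * y) := by
      rw [abs_mul, abs_neg, abs_of_pos hβ, abs_of_pos (Real.exp_pos _)]
    have h2 : (f y) ^ (s - 1) = Real.exp ((-β * y) * (s - 1)) := by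
      rw [Real.exp_mul]
    rw [h1, h2, smul_eq_mul, hg]
    simp only [hf0, ← Real.exp_add]
    rw [mul_assoc, ← Real.exp_add]
    congr 1
    have : -β * y + (-(Real.exp (-β * y)) + -β * y * (s - 1)) =
        (-β * y * s) + (- Real.exp (-β * y)) := by ring
    rw [this, hs, sub_eq_add_neg]
    have : -β * y * (γ / β) = -γ * y := by field_simp
    rw [this]
  -- integrability of g
  have hg0int : IntegrableOn (fun x : ℝ => Real.exp (-x) * x ^ (s - 1)) (Ioi 0) :=
    Real.GammaIntegral_convergent hspos
  have hβg_int : Integrable (fun y => β * g y) := by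
    have := (integrableOn_image_iff_integrableOn_abs_deriv_smul MeasurableSet.univ
      (fun y _ => (hf' y).hasDerivWithinAt) hinj
      (fun x : ℝ => Real.exp (-x) * x ^ (s - 1))).mp (by rwa [himg])
    rw [integrableOn_univ] at this
    exact this.congr (Filter.Eventually.of_forall fun y => hpoint y)
  have hg_int : Integrable g := by
    have := hβg_int.const_mul β⁻¹
    simpa [← mul_assoc, inv_mul_cancel₀ (ne_of_gt hβ)] using this
  -- total integral of g
  have htotal : ∫ y, g y = Real.Gamma s / β := by
    have hchg : ∫ x in f '' univ, Real.exp (-x) * x ^ (s - 1)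
        = ∫ y in univ, |(-β * Real.exp (-β * y))| • (Real.exp (-(f y)) * (f y) ^ (s - 1)) :=
      integral_image_eq_integral_abs_deriv_smul MeasurableSet.univ
        (fun y _ => (hf' y).hasDerivWithinAt) hinj _
    rw [himg, Measure.restrict_univ] at hchg
    have : Real.Gamma s = ∫ y, β * g y := by
      rw [Real.Gamma_eq_integral hspos, hchg]
      exact integral_congr_ae (Filter.Eventually.of_forall fun y => hpoint y)
    rw [integral_const_mul] at this
    rw [eq_comm, div_eq_iff (ne_of_gt hβ)]
    linarith [this]
  -- positivity
  have hgnonneg : ∀ y, 0 ≤ g y := fun y => (Real.exp_pos _).le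
  have hΓpos : 0 < Real.Gamma s := Real.Gamma_pos_of_pos hspos
  set c : ℝ := γ / Real.Gamma (1 + γ / β) with hc
  have hΓ1 : Real.Gamma (1 + γ / β) = s * Real.Gamma s := by
    rw [add_comm]
    exact Real.Gamma_add_one (ne_of_gt hspos)
  have hcpos : 0 < c := by
    rw [hc, hΓ1]
    positivity
  have hctotal : c * (Real.Gamma s / β) = 1 := by
    rw [hc, hΓ1, hs]
    field_simp
  -- the primitive H
  set H : ℝ → ℝ := fun z => ∫ y in Iic z, g y with hH
  have hFx : ∀ x, F t x = c * H (ζ x t) := fun x => hF t x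
  set C : ℝ := γ⁻¹ * Θ t - β⁻¹ * Real.log (1 + ∫ u in (0:ℝ)..t, Real.exp (β * γ⁻¹ * Θ u)) with hC
  have hζx : ∀ x, ζ x t = x + C := by
    intro x; rw [hζ, hC]; ring
  -- continuity of H
  have hHsplit : ∀ z, H z = H 0 + ∫ y in (0:ℝ)..z, g y := by
    intro z
    rw [← intervalIntegral.integral_Iic_sub_Iic hg_int.integrableOn hg_int.integrableOn]
    ring
  have hHcont : Continuous H := by
    have : Continuous fun z => H 0 + ∫ y in (0:ℝ)..z, g y :=
      continuous_const.add (hg_int.continuous_primitive 0)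
    exact this.congr fun z => (hHsplit z).symm
  -- monotonicity of H
  have hHmono : Monotone H := by
    intro a b hab
    exact setIntegral_mono_set hg_int.integrableOn
      (Filter.Eventually.of_forall hgnonneg)
      (HasSubset.Subset.eventuallyLE (Iic_subset_Iic.mpr hab))
  -- limits of H
  have hHbot : Tendsto H atBot (nhds 0) := by
    have h1 : Tendsto (fun z : ℝ => ∫ y in z..(0:ℝ), g y) atBot (nhds (H 0)) :=
      intervalIntegral_tendsto_integral_Iic 0 hg_int.integrableOn tendsto_id
    have : Tendsto (fun z => H 0 - ∫ y in z..(0:ℝ), g y) atBot (nhds (H 0 - H 0)) :=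
      tendsto_const_nhds.sub h1
    rw [sub_self] at this
    refine this.congr fun z => ?_
    rw [hHsplit z, intervalIntegral.integral_symm]
    ring
  have hHtop : Tendsto H atTop (nhds (∫ y, g y)) := by
    have h1 : Tendsto (fun z : ℝ => ∫ y in (0:ℝ)..z, g y) atTop (nhds (∫ y in Ioi 0, g y)) :=
      intervalIntegral_tendsto_integral_Ioi 0 hg_int.integrableOn tendsto_id
    have h2 : Tendsto (fun z => H 0 + ∫ y in (0:ℝ)..z, g y) atTop
        (nhds (H 0 + ∫ y in Ioi 0, g y)) := tendsto_const_nhds.add h1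
    have h3 : H 0 + ∫ y in Ioi 0, g y = ∫ y, g y :=
      intervalIntegral.integral_Iic_add_Ioi hg_int.integrableOn hg_int.integrableOn
    rw [h3] at h2
    exact h2.congr fun z => (hHsplit z).symm
  -- put everything together
  have hFeq : (fun x => F t x) = fun x => c * H (x + C) := by
    funext x; rw [hFx, hζx]
  refine ⟨?_, ?_, ?_, ?_⟩
  · rw [hFeq]
    exact continuous_const.mul (hHcont.comp (continuous_id.add continuous_const))
  · rw [hFeq]
    intro a b hab
    exact mul_le_mul_of_nonneg_left (hHmono (by linarith)) hcpos.le
  · rw [hFeq]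
    have : Tendsto (fun x : ℝ => x + C) atBot atBot := tendsto_atBot_add_const_right _ _ tendsto_id
    have h := (hHbot.comp this).const_mul c
    simpa using h
  · rw [hFeq]
    have : Tendsto (fun x : ℝ => x + C) atTop atTop := tendsto_atTop_add_const_right _ _ tendsto_id
    have h := (hHtop.comp this).const_mul c
    rw [htotal, hctotal] at h
    exact h
end

section
/- ν* is a fixed point of the centered mean-field (McKean–Vlasov) equation: for every continuously differentiable f : ℝ → ℝ with |f'(x)| ≤ 1 for all x, one has ∫ g_f(y) e^{−βy} ν*(dy) = γ⁻¹ ( ∫ e^{−βy} ν*(dy) ) ( ∫ f'(y) ν*(dy) ), all integrals appearing being finite. -/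
open MeasureTheory Filter Set
open scoped ENNReal

lemma exp_hasDerivAt (c t : ℝ) : HasDerivAt (fun t => Real.exp (c * t)) (c * Real.exp (c * t)) t := by
  have : HasDerivAt (fun x : ℝ => c * x) c t := by
    simpa using (hasDerivAt_id t).const_mul c
  simpa [mul_comm] using this.exp

lemma gumbel_integral (β κ : ℝ) (hβ : 0 < β) (hκ : 0 < κ) :
    Integrable (fun t => Real.exp (-κ * t - Real.exp (-β * t))) volume ∧
    (∫ t, Real.exp (-κ * t - Real.exp (-β * t))) = Real.Gamma (κ/β) / β := by
  have hβ' : β ≠ 0 := ne_of_gt hβ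
  set φ : ℝ → ℝ := fun t => Real.exp (-β * t) with hφ
  have hder : ∀ t ∈ (univ : Set ℝ), HasDerivWithinAt φ (-β * Real.exp (-β * t)) univ t :=
    fun t _ => (exp_hasDerivAt (-β) t).hasDerivWithinAt
  have hinj : InjOn φ univ := by
    intro a _ b _ hab
    have h1 := Real.exp_injective hab
    field_simp at h1; linarith
  have himg : φ '' univ = Ioi 0 := by
    rw [image_univ]
    ext s; simp only [mem_range, mem_Ioi]
    constructor
    · rintro ⟨t, rfl⟩; exact Real.exp_pos _
    · intro hs
      refine ⟨-(Real.log s)/β, ?_⟩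
      have h2 : -β * (-(Real.log s)/β) = Real.log s := by field_simp
      rw [hφ]; simp only []; rw [h2, Real.exp_log hs]
  set g : ℝ → ℝ := fun s => Real.exp (-s) * s ^ (κ/β - 1) with hg
  have key : ∀ t : ℝ, |(-β) * Real.exp (-β*t)| • g (φ t) = β * Real.exp (-κ * t - Real.exp (-β * t)) := by
    intro t
    rw [smul_eq_mul]
    simp only [hg, hφ]
    rw [← Real.exp_mul, abs_of_nonpos (by nlinarith [Real.exp_pos (-β*t)])]
    rw [← Real.exp_add]
    have h4 : Real.exp (-β*t) * Real.exp (-Real.exp (-β*t) + -β*t*(κ/β-1))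
        = Real.exp (-κ*t - Real.exp (-β*t)) := by
      rw [← Real.exp_add]; congr 1; field_simp; ring
    linear_combination β * h4
  have hint : IntegrableOn g (Ioi 0) := Real.GammaIntegral_convergent (by positivity)
  have hval : (∫ s in Ioi 0, g s) = Real.Gamma (κ/β) := (Real.Gamma_eq_integral (by positivity)).symm
  have hchg := integral_image_eq_integral_abs_deriv_smul MeasurableSet.univ hder hinj g
  rw [himg] at hchg
  have hchgi := (integrableOn_image_iff_integrableOn_abs_deriv_smul MeasurableSet.univ hder hinj g)
  rw [himg] at hchgi
  have hint2 : IntegrableOn (fun t => |(-β) * Real.exp (-β*t)| • g (φ t)) univ := hchgi.mp hint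
  rw [integrableOn_univ] at hint2
  have hint3 : Integrable (fun t => β * Real.exp (-κ * t - Real.exp (-β * t))) volume := by
    exact hint2.congr (by filter_upwards with t using (key t))
  constructor
  · have := hint3.const_mul β⁻¹
    refine this.congr (by filter_upwards with t; field_simp)
  · rw [hval] at hchg
    rw [Measure.restrict_univ] at hchg
    have : (∫ t, |(-β) * Real.exp (-β*t)| • g (φ t)) = ∫ t, β * Real.exp (-κ * t - Real.exp (-β * t)) := by
      exact integral_congr_ae (by filter_upwards with t using key t)
    rw [this, integral_const_mul] at hchg
    field_simp at hchg ⊢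
    linarith

lemma conv_identity (β : ℝ) (hβ : 0 < β) (t : ℝ) :
    IntegrableOn (fun u => Real.exp (-β*(t-u)) * Real.exp (-Real.exp (-β*(t-u)))) (Ioi 0) ∧
    (∫ u in Ioi 0, Real.exp (-β*(t-u)) * Real.exp (-Real.exp (-β*(t-u))))
      = β⁻¹ * Real.exp (-Real.exp (-β*t)) := by
  set G : ℝ → ℝ := fun u => -β⁻¹ * Real.exp (-Real.exp (-β*(t-u))) with hG
  have hder : ∀ u ∈ Ici (0:ℝ), HasDerivAt G
      (Real.exp (-β*(t-u)) * Real.exp (-Real.exp (-β*(t-u)))) u := by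
    intro u _
    have h1 : HasDerivAt (fun u : ℝ => -β*(t-u)) β u := by
      have := ((hasDerivAt_id u).const_sub t).const_mul (-β)
      simpa using this
    have h2 : HasDerivAt (fun u => Real.exp (-β*(t-u))) (Real.exp (-β*(t-u)) * β) u := h1.exp
    have h3 : HasDerivAt (fun u => -Real.exp (-β*(t-u))) (-(Real.exp (-β*(t-u)) * β)) u := h2.neg
    have h4 := (h3.exp).const_mul (-β⁻¹)
    have hβ' : β ≠ 0 := ne_of_gt hβ
    refine h4.congr_deriv ?_
    have hβinv : β⁻¹ * β = 1 := inv_mul_cancel₀ hβ'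
    linear_combination (Real.exp (-β*(t-u)) * Real.exp (-Real.exp (-β*(t-u)))) * hβinv
  have hpos : ∀ u ∈ Ioi (0:ℝ), 0 ≤ Real.exp (-β*(t-u)) * Real.exp (-Real.exp (-β*(t-u))) :=
    fun u _ => by positivity
  have htend : Tendsto G atTop (nhds 0) := by
    have l1 : Tendsto (fun u : ℝ => -β*(t-u)) atTop atTop := by
      have : (fun u : ℝ => -β*(t-u)) = fun u => β * u + (-β * t) := by funext u; ring
      rw [this]
      exact tendsto_atTop_add_const_right _ _ (tendsto_id.const_mul_atTop hβ)
    have l2 : Tendsto (fun u => -Real.exp (-β*(t-u))) atTop atBot :=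
      tendsto_neg_atBot_iff.mpr (Real.tendsto_exp_atTop.comp l1)
    have l3 : Tendsto (fun u => Real.exp (-Real.exp (-β*(t-u)))) atTop (nhds 0) :=
      Real.tendsto_exp_atBot.comp l2
    have h5 := l3.const_mul (-β⁻¹)
    rw [mul_zero] at h5
    exact h5
  have key := integral_Ioi_of_hasDerivAt_of_nonneg' hder hpos htend
  have keyi := integrableOn_Ioi_deriv_of_nonneg' hder hpos htend
  refine ⟨keyi, ?_⟩
  rw [key, hG]
  simp

lemma exp_rate_tendsto (c : ℝ) (hc : 0 < c) :
    Tendsto (fun z : ℝ => Real.exp (-c * z)) atTop (nhds 0) := by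
  have h1 : Tendsto (fun z : ℝ => -c * z) atTop atBot := by
    have := tendsto_neg_atBot_iff.mpr (tendsto_id.const_mul_atTop hc (α := ℝ))
    refine this.congr fun z => by simp [id]
  exact Real.tendsto_exp_atBot.comp h1

lemma zexp_bound (γ : ℝ) (hγ : 0 < γ) (z : ℝ) (hz : 0 ≤ z) :
    z * Real.exp (-γ*z) ≤ (2/γ) * Real.exp (-(γ/2)*z) := by
  have h1 : γ/2*z + 1 ≤ Real.exp (γ/2*z) := Real.add_one_le_exp _
  have h2 : Real.exp (γ/2*z) * Real.exp (-γ*z) = Real.exp (-(γ/2)*z) := by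
    rw [← Real.exp_add]; congr 1; ring
  have h3 : z ≤ (2/γ) * Real.exp (γ/2*z) := by
    have hp := Real.exp_pos (γ/2*z)
    rw [div_mul_eq_mul_div, le_div_iff₀ hγ]
    nlinarith
  calc z * Real.exp (-γ*z) ≤ ((2/γ) * Real.exp (γ/2*z)) * Real.exp (-γ*z) :=
        mul_le_mul_of_nonneg_right h3 (Real.exp_pos _).le
    _ = (2/γ) * Real.exp (-(γ/2)*z) := by rw [mul_assoc, h2]

lemma int_zexp (γ : ℝ) (hγ : 0 < γ) : IntegrableOn (fun z => z * Real.exp (-γ*z)) (Ioi 0) := by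
  refine Integrable.mono ((exp_neg_integrableOn_Ioi 0 (by positivity : (0:ℝ) < γ/2)).const_mul (2/γ))
    (Continuous.aestronglyMeasurable (by continuity)) ?_
  filter_upwards [ae_restrict_mem measurableSet_Ioi] with z hz
  have hz0 : (0:ℝ) ≤ z := le_of_lt hz
  rw [Real.norm_eq_abs, Real.norm_eq_abs, abs_of_nonneg (by positivity), abs_of_nonneg (by positivity)]
  exact zexp_bound γ hγ z hz0

lemma gf_eq (γ : ℝ) (hγ : 0 < γ) (f : ℝ → ℝ) (hf : ContDiff ℝ 1 f)
    (hf' : ∀ x, |deriv f x| ≤ 1) (y : ℝ) :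
    IntegrableOn (fun z => f (y + z) * (γ * Real.exp (-γ * z))) (Ioi 0) ∧
    IntegrableOn (fun z => deriv f (y + z) * Real.exp (-γ * z)) (Ioi 0) ∧
    (∫ z in Ioi (0:ℝ), f (y + z) * (γ * Real.exp (-γ * z))) - f y
      = ∫ z in Ioi (0:ℝ), deriv f (y + z) * Real.exp (-γ * z) := by
  have hd : Differentiable ℝ f := hf.differentiable one_ne_zero
  have hc : Continuous f := hd.continuous
  have hc' : Continuous (deriv f) := hf.continuous_deriv le_rfl
  have hlip : LipschitzWith 1 f := by
    refine lipschitzWith_of_nnnorm_deriv_le hd fun x => ?_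
    rw [← NNReal.coe_le_coe]
    simpa using hf' x
  have hbound : ∀ z : ℝ, 0 ≤ z → |f (y + z)| ≤ |f y| + z := by
    intro z hz
    have := hlip.dist_le_mul (y + z) y
    rw [Real.dist_eq, Real.dist_eq] at this
    simp only [NNReal.coe_one, one_mul, add_sub_cancel_left, abs_of_nonneg hz] at this
    calc |f (y + z)| ≤ |f (y+z) - f y| + |f y| := by
          have := abs_sub_abs_le_abs_sub (f (y+z)) (f y); linarith [abs_abs (f y)]
      _ ≤ |f y| + z := by linarith
  have int1 : IntegrableOn (fun z => deriv f (y + z) * Real.exp (-γ * z)) (Ioi 0) := by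
    refine Integrable.mono (exp_neg_integrableOn_Ioi 0 hγ)
      (Continuous.aestronglyMeasurable ((hc'.comp (continuous_const.add continuous_id)).mul
        (by continuity))) ?_
    filter_upwards with z
    rw [Real.norm_eq_abs, Real.norm_eq_abs, abs_mul, abs_of_nonneg (Real.exp_pos _).le]
    nlinarith [hf' (y + z), Real.exp_pos (-γ * z), abs_nonneg (deriv f (y+z))]
  have int2 : IntegrableOn (fun z => f (y + z) * (γ * Real.exp (-γ * z))) (Ioi 0) := by
    have dom : IntegrableOn (fun z => γ * |f y| * Real.exp (-γ*z) + γ * (z * Real.exp (-γ*z)))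
        (Ioi 0) := ((exp_neg_integrableOn_Ioi 0 hγ).const_mul _).add ((int_zexp γ hγ).const_mul γ)
    refine Integrable.mono dom (Continuous.aestronglyMeasurable (by continuity)) ?_
    filter_upwards [ae_restrict_mem measurableSet_Ioi] with z hz
    have hz0 : (0:ℝ) ≤ z := le_of_lt hz
    have hb := hbound z hz0
    have he := Real.exp_pos (-γ*z)
    rw [Real.norm_eq_abs, Real.norm_eq_abs, abs_mul, abs_mul, abs_of_nonneg he.le,
      abs_of_nonneg hγ.le, abs_of_nonneg (by positivity : (0:ℝ) ≤ γ * |f y| * Real.exp (-γ*z) + γ * (z * Real.exp (-γ*z)))]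
    nlinarith [mul_le_mul_of_nonneg_right hb (mul_pos hγ he).le]
  refine ⟨int2, int1, ?_⟩
  set F : ℝ → ℝ := fun z => -(f (y + z) * Real.exp (-γ * z)) with hF
  have hderF : ∀ z ∈ Ici (0:ℝ), HasDerivAt F
      (f (y + z) * (γ * Real.exp (-γ * z)) - deriv f (y + z) * Real.exp (-γ * z)) z := by
    intro z _
    have h1 : HasDerivAt (fun z => f (y + z)) (deriv f (y + z)) z := by
      have := ((hd (y + z)).hasDerivAt).comp z ((hasDerivAt_id z).const_add y)
      rw [mul_one] at this; exact this
    have h2 : HasDerivAt (fun z => Real.exp (-γ * z)) (-γ * Real.exp (-γ * z)) z :=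
      exp_hasDerivAt (-γ) z
    have h3 := (h1.mul h2).neg
    have h5 : HasDerivAt F _ z := h3
    refine h5.congr_deriv ?_
    ring
  have hFtend : Tendsto F atTop (nhds 0) := by
    apply squeeze_zero_norm' (a := fun z : ℝ => |f y| * Real.exp (-γ*z) + (2/γ) * Real.exp (-(γ/2)*z)) (f := F)
    · filter_upwards [eventually_ge_atTop (0:ℝ)] with z hz
      have hb := hbound z hz
      have he := Real.exp_pos (-γ*z)
      have hz2 := zexp_bound γ hγ z hz
      rw [hF]
      simp only [norm_neg, Real.norm_eq_abs, abs_mul, abs_of_nonneg he.le]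
      nlinarith [abs_nonneg (f (y+z))]
    · have l1 := (exp_rate_tendsto γ hγ).const_mul (|f y|)
      have l2 := (exp_rate_tendsto (γ/2) (by positivity)).const_mul (2/γ)
      have := l1.add l2
      simpa using this
  have key := integral_Ioi_of_hasDerivAt_of_tendsto' hderF (int2.sub int1) hFtend
  rw [integral_sub int2 int1] at key
  rw [hF] at key
  simp only [add_zero, neg_mul, mul_zero, neg_zero, Real.exp_zero, mul_one, zero_sub, neg_neg] at key
  simp only [neg_mul]
  linarith

/-- The Gumbel-type measure `ν*` is a fixed point of the centered McKean-Vlasov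
equation: for every `C¹` function `f` with `|f'| ≤ 1`,
`∫ g_f(y) e^{-βy} ν*(dy) = γ⁻¹ (∫ e^{-βy} ν*(dy)) (∫ f'(y) ν*(dy))`. -/
theorem nustar_fixed_point
    (β γ : ℝ) (hβ : 0 < β) (hβγ : β ≤ γ)
    (Ψ : ℝ → ℝ) (hΨ : ∀ a, Ψ a = deriv Real.Gamma a / Real.Gamma a)
    (ν : Measure ℝ)
    (hν : ν = volume.withDensity (fun x => ENNReal.ofReal
      ((γ / Real.Gamma (1 + γ / β)) * Real.exp
        (-γ * (x - β⁻¹ * Ψ (γ / β)) - Real.exp (-β * (x - β⁻¹ * Ψ (γ / β)))))))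
    (g : (ℝ → ℝ) → ℝ → ℝ)
    (hg : ∀ f x, g f x = (∫ z in Set.Ioi (0:ℝ), f (x + z) * (γ * Real.exp (-γ * z))) - f x)
    (f : ℝ → ℝ) (hf : ContDiff ℝ 1 f) (hf' : ∀ x, |deriv f x| ≤ 1) :
    Integrable (fun y => g f y * Real.exp (-β * y)) ν ∧
    Integrable (fun y => Real.exp (-β * y)) ν ∧
    Integrable (deriv f) ν ∧
    (∫ y, g f y * Real.exp (-β * y) ∂ν)
      = γ⁻¹ * (∫ y, Real.exp (-β * y) ∂ν) * (∫ y, deriv f y ∂ν) := by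
  have hγ : 0 < γ := lt_of_lt_of_le hβ hβγ
  have hβ' : β ≠ 0 := ne_of_gt hβ
  have hγ' : γ ≠ 0 := ne_of_gt hγ
  set m : ℝ := β⁻¹ * Ψ (γ / β) with hm
  set c : ℝ := γ / Real.Gamma (1 + γ / β) with hc
  have hΓpos : 0 < Real.Gamma (1 + γ / β) := Real.Gamma_pos_of_pos (by positivity)
  have hcpos : 0 < c := div_pos hγ hΓpos
  set ρ : ℝ → ℝ := fun x => c * Real.exp (-γ * (x - m) - Real.exp (-β * (x - m))) with hρ
  have hρpos : ∀ x, 0 < ρ x := fun x => by positivity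
  have hρcont : Continuous ρ := by fun_prop
  have hd : Differentiable ℝ f := hf.differentiable one_ne_zero
  have hdc : Continuous (deriv f) := hf.continuous_deriv le_rfl
  -- conversion lemmas for withDensity
  have hmeas : Measurable fun x => ENNReal.ofReal (ρ x) := hρcont.measurable.ennreal_ofReal
  have hIntIff : ∀ h : ℝ → ℝ, Integrable h ν ↔ Integrable (fun x => h x * ρ x) volume := by
    intro h
    rw [hν, integrable_withDensity_iff hmeas (Eventually.of_forall fun x => ENNReal.ofReal_lt_top)]
    exact integrable_congr (Eventually.of_forall fun x => by
      simp [ENNReal.toReal_ofReal (hρpos x).le])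
  have hIntEq : ∀ h : ℝ → ℝ, (∫ y, h y ∂ν) = ∫ y, ρ y * h y := by
    intro h
    rw [hν]
    have h0 : (volume.withDensity fun x => ENNReal.ofReal (ρ x))
        = volume.withDensity (fun x => ((fun x => (ρ x).toNNReal) x : ℝ≥0∞)) := rfl
    rw [h0, integral_withDensity_eq_integral_smul (hρcont.measurable.real_toNNReal) h]
    exact integral_congr_ae (Eventually.of_forall fun x => by
      simp [NNReal.smul_def, Real.coe_toNNReal _ (hρpos x).le])
  -- basic integrability of ρ and w
  have Iρ : Integrable ρ := by
    have := ((gumbel_integral β γ hβ hγ).1.comp_sub_right m).const_mul c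
    exact this
  set w : ℝ → ℝ := fun x => ρ x * Real.exp (-β * x) with hwdef
  have hwpos : ∀ x, 0 < w x := fun x => by
    have := hρpos x; have := Real.exp_pos (-β * x); rw [hwdef]; positivity
  have hwcont : Continuous w := by fun_prop
  have hw : ∀ x, w x = (c * Real.exp (-β*m)) * Real.exp (-(β+γ)*(x-m) - Real.exp (-β*(x-m))) := by
    intro x
    have e1 : Real.exp (-γ*(x-m) - Real.exp (-β*(x-m))) * Real.exp (-β*x)
        = Real.exp (-β*m) * Real.exp (-(β+γ)*(x-m) - Real.exp (-β*(x-m))) := by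
      rw [← Real.exp_add, ← Real.exp_add]; congr 1; ring
    rw [hwdef, hρ]
    linear_combination c * e1
  have Iw : Integrable w := by
    have h1 := ((gumbel_integral β (β+γ) hβ (by positivity)).1.comp_sub_right m).const_mul
      (c * Real.exp (-β*m))
    exact h1.congr (Eventually.of_forall fun x => (hw x).symm)
  have hA : (∫ x, w x) = γ/β * Real.exp (-β*m) := by
    have h1 : (∫ x, w x) = ∫ x, (c * Real.exp (-β*m)) *
        (fun t => Real.exp (-(β+γ)*t - Real.exp (-β*t))) (x - m) :=
      integral_congr_ae (Eventually.of_forall fun x => hw x)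
    rw [h1, integral_const_mul, integral_sub_right_eq_self
      (fun t => Real.exp (-(β+γ)*t - Real.exp (-β*t))) m, (gumbel_integral β (β+γ) hβ (by positivity)).2]
    have h2 : (β+γ)/β = 1 + γ/β := by field_simp
    rw [h2, hc]
    field_simp
  -- rewrite g f
  have ggf : ∀ y, g f y = ∫ z in Ioi (0:ℝ), deriv f (y+z) * Real.exp (-γ*z) := by
    intro y
    rw [hg f y, (gf_eq γ hγ f hf hf' y).2.2]
  -- Fubini integrand 1
  set H₁ : ℝ → ℝ → ℝ := fun y z => w y * (deriv f (y + z) * Real.exp (-γ * z)) with hH₁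
  have IH₁ : Integrable (Function.uncurry H₁) (volume.prod (volume.restrict (Ioi 0))) := by
    have hdom : Integrable (fun p : ℝ × ℝ => w p.1 * Real.exp (-γ * p.2))
        (volume.prod (volume.restrict (Ioi 0))) :=
      Iw.mul_prod (exp_neg_integrableOn_Ioi 0 hγ)
    refine hdom.mono (Continuous.aestronglyMeasurable ?_) ?_
    · exact (hwcont.comp continuous_fst).mul
        ((hdc.comp (continuous_fst.add continuous_snd)).mul (by fun_prop))
    · filter_upwards with p
      have h1 := hf' (p.1 + p.2)
      have h2 := (hwpos p.1).le
      have h3 := (Real.exp_pos (-γ * p.2)).le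
      rw [Function.uncurry_def, Real.norm_eq_abs, Real.norm_eq_abs, hH₁]
      simp only [abs_mul, abs_of_nonneg h2, abs_of_nonneg h3]
      have h4 : |deriv f (p.1+p.2)| * Real.exp (-γ*p.2) ≤ Real.exp (-γ*p.2) := by nlinarith
      exact mul_le_mul_of_nonneg_left h4 h2
  -- the integrand for the LHS over ν
  have hLint : Integrable (fun y => (g f y * Real.exp (-β * y)) * ρ y) volume := by
    have h1 := IH₁.integral_prod_left
    refine h1.congr (Eventually.of_forall fun y => ?_)
    show (∫ z in Ioi (0:ℝ), w y * (deriv f (y + z) * Real.exp (-γ * z))) = _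
    rw [integral_const_mul, ← ggf y]
    simp only [hwdef]
    ring
  -- claim 1
  have C1 : Integrable (fun y => g f y * Real.exp (-β * y)) ν := (hIntIff _).mpr hLint
  -- claim 2
  have C2 : Integrable (fun y => Real.exp (-β * y)) ν := by
    rw [hIntIff]
    exact Iw.congr (Eventually.of_forall fun x => by rw [hwdef]; ring)
  -- claim 3
  have Iρf' : Integrable (fun x => deriv f x * ρ x) volume := by
    refine Iρ.mono (hdc.mul hρcont).aestronglyMeasurable ?_
    filter_upwards with x
    rw [Real.norm_eq_abs, Real.norm_eq_abs, abs_mul, abs_of_nonneg (hρpos x).le]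
    nlinarith [hf' x, (hρpos x).le, abs_nonneg (deriv f x)]
  have C3 : Integrable (deriv f) ν := (hIntIff _).mpr Iρf'
  refine ⟨C1, C2, C3, ?_⟩
  -- pointwise convolution identity
  have hconv : ∀ x, (∫ z in Ioi (0:ℝ), Real.exp (-γ*z) * w (x-z))
      = β⁻¹ * Real.exp (-β*m) * ρ x := by
    intro x
    obtain ⟨cint, cval⟩ := conv_identity β hβ (x - m)
    have hpt : ∀ z : ℝ, Real.exp (-γ*z) * w (x-z)
        = (c * Real.exp (-β*m) * Real.exp (-γ*(x-m))) *
          (Real.exp (-β*((x-m)-z)) * Real.exp (-Real.exp (-β*((x-m)-z)))) := by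
      intro z
      have harg : (x-m)-z = (x-z)-m := by ring
      rw [harg, hw (x-z)]
      have e1 : Real.exp (-(β+γ)*((x-z)-m) - Real.exp (-β*((x-z)-m)))
          = Real.exp (-(β+γ)*((x-z)-m)) * Real.exp (-Real.exp (-β*((x-z)-m))) := by
        rw [← Real.exp_add]; congr 1
      have e2 : Real.exp (-γ*z) * Real.exp (-(β+γ)*((x-z)-m))
          = Real.exp (-γ*(x-m)) * Real.exp (-β*((x-z)-m)) := by
        rw [← Real.exp_add, ← Real.exp_add]; congr 1; ring
      rw [e1]
      linear_combination (c * Real.exp (-β*m) * Real.exp (-Real.exp (-β*((x-z)-m)))) * e2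
    calc (∫ z in Ioi (0:ℝ), Real.exp (-γ*z) * w (x-z))
        = ∫ z in Ioi (0:ℝ), (c * Real.exp (-β*m) * Real.exp (-γ*(x-m))) *
          (Real.exp (-β*((x-m)-z)) * Real.exp (-Real.exp (-β*((x-m)-z)))) :=
        integral_congr_ae (Eventually.of_forall fun z => hpt z)
      _ = (c * Real.exp (-β*m) * Real.exp (-γ*(x-m))) *
          (β⁻¹ * Real.exp (-Real.exp (-β*(x-m)))) := by rw [integral_const_mul, cval]
      _ = β⁻¹ * Real.exp (-β*m) * ρ x := by
          have e3 : Real.exp (-γ*(x-m)) * Real.exp (-Real.exp (-β*(x-m)))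
              = Real.exp (-γ*(x-m) - Real.exp (-β*(x-m))) := by
            rw [← Real.exp_add]; congr 1
          simp only [hρ]
          linear_combination (β⁻¹ * Real.exp (-β*m) * c) * e3
  -- second Fubini integrand
  set H₂ : ℝ → ℝ → ℝ := fun z x => Real.exp (-γ*z) * (w (x-z) * deriv f x) with hH₂
  have IH₂ : Integrable (Function.uncurry H₂) ((volume.restrict (Ioi 0)).prod volume) := by
    have hcont2 : Continuous (Function.uncurry H₂) := by
      refine ((by fun_prop : Continuous fun p : ℝ × ℝ => Real.exp (-γ*p.1))).mul
        (((hwcont.comp (continuous_snd.sub continuous_fst))).mul (hdc.comp continuous_snd))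
    have hmeas2 : AEStronglyMeasurable (Function.uncurry H₂)
        ((volume.restrict (Ioi 0)).prod volume) := hcont2.aestronglyMeasurable
    rw [integrable_prod_iff hmeas2]
    constructor
    · refine Eventually.of_forall fun z => ?_
      have hwz : Integrable (fun x => w (x - z)) volume := Iw.comp_sub_right z
      have h5 : Integrable (fun x => w (x-z) * deriv f x) volume := by
        refine hwz.mono ((hwcont.comp (continuous_id.sub continuous_const)).mul
          hdc).aestronglyMeasurable ?_
        filter_upwards with x
        rw [Real.norm_eq_abs, Real.norm_eq_abs, abs_mul, abs_of_nonneg (hwpos (x-z)).le]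
        have h6 : |deriv f x| ≤ 1 := hf' x
        nlinarith [(hwpos (x-z)).le, abs_nonneg (deriv f x)]
      show Integrable (fun x => Real.exp (-γ*z) * (w (x-z) * deriv f x)) volume
      exact h5.const_mul _
    · refine Integrable.mono ((exp_neg_integrableOn_Ioi 0 hγ).mul_const (∫ x, w x))
        (hmeas2.norm.integral_prod_right') ?_
      filter_upwards [ae_restrict_mem measurableSet_Ioi] with z hz
      have hwInt : 0 ≤ ∫ x, w x := integral_nonneg fun x => (hwpos x).le
      have hle : ∀ x : ℝ, ‖Function.uncurry H₂ (z, x)‖ ≤ Real.exp (-γ*z) * w (x-z) := by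
        intro x
        show ‖Real.exp (-γ*z) * (w (x-z) * deriv f x)‖ ≤ _
        rw [Real.norm_eq_abs, abs_mul, abs_mul, abs_of_nonneg (Real.exp_pos _).le,
          abs_of_nonneg (hwpos (x-z)).le]
        have h6 : |deriv f x| ≤ 1 := hf' x
        nlinarith [(hwpos (x-z)).le, (Real.exp_pos (-γ*z)).le, abs_nonneg (deriv f x),
          mul_nonneg (Real.exp_pos (-γ*z)).le (hwpos (x-z)).le]
      have hb : (∫ x, ‖Function.uncurry H₂ (z, x)‖) ≤ Real.exp (-γ*z) * (∫ x, w x) := by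
        calc (∫ x, ‖Function.uncurry H₂ (z, x)‖)
            ≤ ∫ x, Real.exp (-γ*z) * w (x-z) :=
              integral_mono_of_nonneg (Eventually.of_forall fun x => norm_nonneg _)
                ((Iw.comp_sub_right z).const_mul _) (Eventually.of_forall hle)
          _ = Real.exp (-γ*z) * ∫ x, w (x-z) := integral_const_mul _ _
          _ = Real.exp (-γ*z) * ∫ x, w x := by rw [integral_sub_right_eq_self w z]
      rw [Real.norm_eq_abs, Real.norm_eq_abs,
        abs_of_nonneg (integral_nonneg fun x => norm_nonneg _),
        abs_of_nonneg (mul_nonneg (Real.exp_pos _).le hwInt)]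
      exact hb
  have hswap1 : (∫ y, ∫ z in Ioi (0:ℝ), H₁ y z) = ∫ z in Ioi (0:ℝ), ∫ y, H₁ y z :=
    integral_integral_swap IH₁
  have hswap2 : (∫ z in Ioi (0:ℝ), ∫ x, H₂ z x) = ∫ x, ∫ z in Ioi (0:ℝ), H₂ z x :=
    integral_integral_swap IH₂
  have hshift : ∀ z : ℝ, (∫ y, H₁ y z) = ∫ x, H₂ z x := by
    intro z
    have h1 := integral_add_right_eq_self (μ := volume) (fun x => H₂ z x) z
    rw [← h1]
    refine integral_congr_ae (Eventually.of_forall fun y => ?_)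
    show w y * (deriv f (y + z) * Real.exp (-γ * z))
      = Real.exp (-γ*z) * (w (y + z - z) * deriv f (y+z))
    rw [add_sub_cancel_right]
    ring
  have LHSval : (∫ y, g f y * Real.exp (-β * y) ∂ν)
      = (β⁻¹ * Real.exp (-β*m)) * ∫ x, ρ x * deriv f x := by
    rw [hIntEq (fun y => g f y * Real.exp (-β * y))]
    have h1 : (∫ y, ρ y * (g f y * Real.exp (-β * y))) = ∫ y, ∫ z in Ioi (0:ℝ), H₁ y z := by
      refine integral_congr_ae (Eventually.of_forall fun y => ?_)
      show _ = ∫ z in Ioi (0:ℝ), w y * (deriv f (y + z) * Real.exp (-γ * z))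
      rw [integral_const_mul, ← ggf y]
      simp only [hwdef]; ring
    rw [h1, hswap1]
    have h2 : (∫ z in Ioi (0:ℝ), ∫ y, H₁ y z) = ∫ z in Ioi (0:ℝ), ∫ x, H₂ z x :=
      integral_congr_ae (Eventually.of_forall fun z => hshift z)
    rw [h2, hswap2]
    have h3 : (∫ x, ∫ z in Ioi (0:ℝ), H₂ z x)
        = ∫ x, (β⁻¹ * Real.exp (-β*m)) * (ρ x * deriv f x) := by
      refine integral_congr_ae (Eventually.of_forall fun x => ?_)
      show (∫ z in Ioi (0:ℝ), Real.exp (-γ*z) * (w (x-z) * deriv f x)) = _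
      have h4 : ∀ z : ℝ, Real.exp (-γ*z) * (w (x-z) * deriv f x)
          = deriv f x * (Real.exp (-γ*z) * w (x-z)) := fun z => by ring
      rw [integral_congr_ae (Eventually.of_forall fun z => h4 z), integral_const_mul, hconv x]
      show _ = β⁻¹ * Real.exp (-β*m) * (ρ x * deriv f x)
      ring
    rw [h3, integral_const_mul]
  have RHS2 : (∫ y, Real.exp (-β * y) ∂ν) = γ/β * Real.exp (-β*m) := by
    rw [hIntEq (fun y => Real.exp (-β * y)), ← hA]
  have RHS3 : (∫ y, deriv f y ∂ν) = ∫ x, ρ x * deriv f x := hIntEq _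
  rw [LHSval, RHS2, RHS3]
  field_simp
end

section
/- For all β, γ > 0, ν* is a Borel probability measure on ℝ with finite first absolute moment and mean zero: ν*(ℝ) = 1, ∫ |x| ν*(dx) < ∞ and ∫ x ν*(dx) = 0. -/
open MeasureTheory
open scoped ENNReal NNReal

namespace NuStarAux

open Set Filter
open scoped Topology

lemma injOn_exp_neg_mul {β : ℝ} (hβ : 0 < β) :
    Set.InjOn (fun x : ℝ => Real.exp (-β * x)) Set.univ := by
  intro a _ b _ h
  have h2 : -β * a = -β * b := Real.exp_injective h
  exact mul_left_cancel₀ (neg_ne_zero.2 hβ.ne') h2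

lemma image_exp_neg_mul {β : ℝ} (hβ : 0 < β) :
    (fun x : ℝ => Real.exp (-β * x)) '' Set.univ = Set.Ioi 0 := by
  rw [Set.image_univ]
  ext t
  simp only [Set.mem_range, Set.mem_Ioi]
  constructor
  · rintro ⟨x, rfl⟩; exact Real.exp_pos _
  · intro ht
    refine ⟨-(Real.log t) / β, ?_⟩
    rw [show -β * (-(Real.log t) / β) = Real.log t by field_simp, Real.exp_log ht]

lemma hasDerivWithinAt_exp_neg_mul {β : ℝ} :
    ∀ x ∈ (Set.univ : Set ℝ), HasDerivWithinAt (fun x : ℝ => Real.exp (-β * x))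
      (-β * Real.exp (-β * x)) Set.univ x := by
  intro x _
  have h : HasDerivAt (fun x : ℝ => Real.exp (-β * x)) (Real.exp (-β * x) * (-β * 1)) x :=
    ((hasDerivAt_id x).const_mul (-β)).exp
  have h2 : Real.exp (-β * x) * (-β * 1) = -β * Real.exp (-β * x) := by ring
  exact (h2 ▸ h).hasDerivWithinAt

lemma sub_integral {β : ℝ} (hβ : 0 < β) (g : ℝ → ℝ) :
    ∫ t in Set.Ioi (0:ℝ), g t
      = ∫ x : ℝ, (β * Real.exp (-β * x)) * g (Real.exp (-β * x)) := by
  have h := integral_image_eq_integral_abs_deriv_smul (f' := fun x => -β * Real.exp (-β * x))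
    MeasurableSet.univ hasDerivWithinAt_exp_neg_mul (injOn_exp_neg_mul hβ) g
  rw [image_exp_neg_mul hβ] at h
  rw [h, Measure.restrict_univ]
  congr 1
  funext x
  rw [smul_eq_mul, abs_mul, abs_neg, abs_of_pos hβ, abs_of_pos (Real.exp_pos _)]

lemma sub_integrable {β : ℝ} (hβ : 0 < β) (g : ℝ → ℝ) :
    IntegrableOn g (Set.Ioi (0:ℝ)) ↔
      Integrable (fun x : ℝ => (β * Real.exp (-β * x)) * g (Real.exp (-β * x))) := by
  have h := integrableOn_image_iff_integrableOn_abs_deriv_smul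
    (f' := fun x => -β * Real.exp (-β * x))
    MeasurableSet.univ hasDerivWithinAt_exp_neg_mul (injOn_exp_neg_mul hβ) g
  rw [image_exp_neg_mul hβ] at h
  rw [h, integrableOn_univ]
  constructor <;> intro h2 <;> refine h2.congr ?_ <;> filter_upwards with x <;>
    rw [smul_eq_mul, abs_mul, abs_neg, abs_of_pos hβ, abs_of_pos (Real.exp_pos _)]


lemma log_abs_integrable {s : ℝ} (hs : 0 < s) :
    IntegrableOn (fun t : ℝ => Real.exp (-t) * t ^ (s - 1) * |Real.log t|)
      (Set.Ioi (0:ℝ)) := by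
  have hmeas : Measurable (fun t : ℝ => Real.exp (-t) * t ^ (s - 1) * |Real.log t|) :=
    ((Real.measurable_exp.comp measurable_neg).mul (by fun_prop)).mul Real.measurable_log.abs
  rw [← Set.Ioc_union_Ioi_eq_Ioi (zero_le_one : (0:ℝ) ≤ 1)]
  apply IntegrableOn.union
  · -- on Ioc 0 1 : dominated by (2/s) * t ^ (s/2 - 1)
    have hdom : IntegrableOn (fun t : ℝ => (2 / s) * t ^ (s / 2 - 1)) (Set.Ioc (0:ℝ) 1) := by
      apply Integrable.const_mul
      exact (intervalIntegrable_iff_integrableOn_Ioc_of_le zero_le_one).1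
        (intervalIntegral.intervalIntegrable_rpow' (by linarith))
    refine Integrable.mono' hdom (hmeas.aestronglyMeasurable.restrict) ?_
    rw [ae_restrict_iff' measurableSet_Ioc]
    filter_upwards with t ht
    have ht0 : 0 < t := ht.1
    have hlog : |Real.log t| ≤ (2 / s) * t ^ (-(s/2)) := by
      have h1 : Real.log (t ^ (-(s/2))) ≤ t ^ (-(s/2)) - 1 :=
        Real.log_le_sub_one_of_pos (Real.rpow_pos_of_pos ht0 _)
      have h2 : Real.log (t ^ (-(s/2))) = -(s/2) * Real.log t := Real.log_rpow ht0 _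
      have h3 : |Real.log t| = -Real.log t :=
        abs_of_nonpos (Real.log_nonpos ht0.le ht.2)
      have h4 : 0 < t ^ (-(s/2)) := Real.rpow_pos_of_pos ht0 _
      have h5 : -(s/2) * Real.log t ≤ t ^ (-(s/2)) := by
        rw [← h2]; linarith
      have h6 := mul_le_mul_of_nonneg_left h5 (le_of_lt (by positivity : (0:ℝ) < 2/s))
      rw [h3, show -Real.log t = (2/s) * (-(s/2) * Real.log t) by field_simp]
      exact h6
    have hexp : Real.exp (-t) ≤ 1 := Real.exp_le_one_iff.2 (by linarith)
    have hrp : (0:ℝ) ≤ t ^ (s-1) := (Real.rpow_pos_of_pos ht0 _).le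
    have key : Real.exp (-t) * t ^ (s - 1) * |Real.log t|
        ≤ (2/s) * (t ^ (s-1) * t ^ (-(s/2))) := by
      calc Real.exp (-t) * t ^ (s - 1) * |Real.log t|
          ≤ 1 * t ^ (s - 1) * ((2/s) * t ^ (-(s/2))) := by
            apply mul_le_mul (by nlinarith) hlog (abs_nonneg _) (by nlinarith)
        _ = (2/s) * (t ^ (s-1) * t ^ (-(s/2))) := by ring
    rw [Real.norm_eq_abs, abs_of_nonneg (by positivity)]
    calc Real.exp (-t) * t ^ (s - 1) * |Real.log t|
        ≤ (2/s) * (t ^ (s-1) * t ^ (-(s/2))) := key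
      _ = (2/s) * t ^ (s/2 - 1) := by
          rw [← Real.rpow_add ht0]; ring_nf
  · -- on Ioi 1 : dominated by exp (-t) * t ^ ((s+1) - 1)
    have hdom : IntegrableOn (fun t : ℝ => Real.exp (-t) * t ^ (s + 1 - 1)) (Set.Ioi (1:ℝ)) :=
      (Real.GammaIntegral_convergent (by linarith)).mono_set
        (Set.Ioi_subset_Ioi zero_le_one)
    refine Integrable.mono' hdom (hmeas.aestronglyMeasurable.restrict) ?_
    rw [ae_restrict_iff' measurableSet_Ioi]
    filter_upwards with t ht
    rw [Set.mem_Ioi] at ht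
    have ht0 : (0:ℝ) < t := by linarith
    have hlog : |Real.log t| ≤ t := by
      rw [abs_of_nonneg (Real.log_nonneg ht.le)]
      linarith [Real.log_le_sub_one_of_pos ht0]
    have hrp : (0:ℝ) < t ^ (s-1) := Real.rpow_pos_of_pos ht0 _
    rw [Real.norm_eq_abs, abs_of_nonneg (by positivity)]
    calc Real.exp (-t) * t ^ (s - 1) * |Real.log t|
        ≤ Real.exp (-t) * t ^ (s - 1) * t := by
          apply mul_le_mul_of_nonneg_left hlog (by positivity)
      _ = Real.exp (-t) * t ^ (s + 1 - 1) := by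
          rw [show s + 1 - 1 = (s-1) + 1 by ring, Real.rpow_add_one ht0.ne']
          ring


lemma deriv_Gamma_integral {s : ℝ} (hs : 0 < s) :
    ∫ t in Set.Ioi (0:ℝ), Real.exp (-t) * t ^ (s - 1) * Real.log t = deriv Real.Gamma s := by
  have hs' : 0 < (s:ℂ).re := by rwa [Complex.ofReal_re]
  have h1 : HasDerivAt Complex.GammaIntegral
      (∫ t : ℝ in Ioi 0, (t:ℂ) ^ ((s:ℂ) - 1) * (Real.log t * Real.exp (-t))) (s:ℂ) :=
    Complex.hasDerivAt_GammaIntegral hs'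
  have hopen : {z : ℂ | 0 < z.re} ∈ 𝓝 (s:ℂ) := by
    refine IsOpen.mem_nhds ?_ hs'
    exact isOpen_lt continuous_const Complex.continuous_re
  have h2 : Complex.Gamma =ᶠ[𝓝 (s:ℂ)] Complex.GammaIntegral := by
    filter_upwards [hopen] with z hz
    exact Complex.Gamma_eq_integral hz
  have h3 : HasDerivAt Complex.Gamma
      (∫ t : ℝ in Ioi 0, (t:ℂ) ^ ((s:ℂ) - 1) * (Real.log t * Real.exp (-t))) (s:ℂ) :=
    h1.congr_of_eventuallyEq h2
  have h4 := h3.real_of_complex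
  have h5 : (fun x : ℝ => (Complex.Gamma (x:ℂ)).re) = Real.Gamma := by
    funext x
    rw [Complex.Gamma_ofReal, Complex.ofReal_re]
  rw [h5] at h4
  have h6 : (∫ t : ℝ in Ioi 0, (t:ℂ) ^ ((s:ℂ) - 1) * (Real.log t * Real.exp (-t)))
      = ((∫ t : ℝ in Ioi 0, Real.exp (-t) * t ^ (s - 1) * Real.log t : ℝ) : ℂ) := by
    have h7 := integral_ofReal (𝕜 := ℂ)
      (f := fun t => Real.exp (-t) * t ^ (s - 1) * Real.log t) (μ := volume.restrict (Ioi 0))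
    refine Eq.trans ?_ h7
    refine setIntegral_congr_fun measurableSet_Ioi fun t ht => ?_
    show _ = ((Real.exp (-t) * t ^ (s - 1) * Real.log t : ℝ) : ℂ)
    rw [Set.mem_Ioi] at ht
    push_cast
    rw [Complex.ofReal_cpow ht.le]
    push_cast
    ring
  rw [h6] at h4
  rw [h4.deriv, Complex.ofReal_re]

end NuStarAux

open NuStarAux

/-- `ν*` is a Borel probability measure on `ℝ` with finite first absolute
moment and mean zero. -/
theorem nustar_probability_centered
    (β γ : ℝ) (hβ : 0 < β) (hγ : 0 < γ)
    (Ψ : ℝ → ℝ) (hΨ : ∀ a, Ψ a = deriv Real.Gamma a / Real.Gamma a)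
    (ν : Measure ℝ)
    (hν : ν = volume.withDensity (fun x => ENNReal.ofReal
      ((γ / Real.Gamma (1 + γ / β)) * Real.exp
        (-γ * (x - β⁻¹ * Ψ (γ / β)) - Real.exp (-β * (x - β⁻¹ * Ψ (γ / β))))))) :
    ν Set.univ = 1 ∧ Integrable (fun x : ℝ => |x|) ν ∧ (∫ x, x ∂ν) = 0 := by
  have hs : 0 < γ / β := div_pos hγ hβ
  set s : ℝ := γ / β with hsdef
  have hγβ : γ = β * s := by rw [hsdef]; field_simp
  have hΓpos : 0 < Real.Gamma s := Real.Gamma_pos_of_pos hs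
  have hΓ1 : Real.Gamma (1 + s) = s * Real.Gamma s := by
    rw [add_comm]; exact Real.Gamma_add_one hs.ne'
  set c : ℝ := γ / Real.Gamma (1 + s) with hcdef
  have hcpos : 0 < c := div_pos hγ (by rw [hΓ1]; positivity)
  set μ : ℝ := β⁻¹ * Ψ s with hμdef
  set E : ℝ → ℝ := fun x => Real.exp (-γ * x - Real.exp (-β * x)) with hEdef
  have hEpos : ∀ y, 0 < E y := fun y => Real.exp_pos _
  have hEcont : Continuous E := by
    rw [hEdef]
    exact Real.continuous_exp.comp ((continuous_const.mul continuous_id).sub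
      (Real.continuous_exp.comp (continuous_const.mul continuous_id)))
  have hνd : ν = volume.withDensity (fun x => ENNReal.ofReal (c * E (x - μ))) := hν
  -- pointwise substitution identities
  have hpt1 : ∀ x : ℝ, (β * Real.exp (-β * x)) *
      ((fun t => Real.exp (-t) * t ^ (s - 1)) (Real.exp (-β * x))) = β * E x := by
    intro x
    show β * Real.exp (-β * x) *
      (Real.exp (-(Real.exp (-β * x))) * (Real.exp (-β * x)) ^ (s - 1)) = β * E x
    rw [Real.rpow_def_of_pos (Real.exp_pos _), Real.log_exp, ← Real.exp_add, mul_assoc,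
      ← Real.exp_add]
    show β * Real.exp (-β * x + (-(Real.exp (-β * x)) + -β * x * (s - 1))) = β * Real.exp _
    congr 1
    rw [hγβ]
    ring
  have hpt2 : ∀ x : ℝ, (β * Real.exp (-β * x)) *
      ((fun t => Real.exp (-t) * t ^ (s - 1) * (-(Real.log t) / β)) (Real.exp (-β * x)))
      = β * (x * E x) := by
    intro x
    show β * Real.exp (-β * x) *
      (Real.exp (-(Real.exp (-β * x))) * (Real.exp (-β * x)) ^ (s - 1)
        * (-(Real.log (Real.exp (-β * x))) / β)) = β * (x * E x)
    rw [Real.log_exp, ← mul_assoc, hpt1 x]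
    field_simp
  have hpt3 : ∀ x : ℝ, (β * Real.exp (-β * x)) *
      ((fun t => Real.exp (-t) * t ^ (s - 1) * (|Real.log t| / β)) (Real.exp (-β * x)))
      = β * (|x| * E x) := by
    intro x
    show β * Real.exp (-β * x) *
      (Real.exp (-(Real.exp (-β * x))) * (Real.exp (-β * x)) ^ (s - 1)
        * (|Real.log (Real.exp (-β * x))| / β)) = β * (|x| * E x)
    rw [Real.log_exp, ← mul_assoc, hpt1 x, show |(-β * x)| = β * |x| by
      rw [abs_mul, abs_neg, abs_of_pos hβ]]
    field_simp
  -- integrability and integral of E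
  have hint1 : Integrable E := by
    have h := (sub_integrable hβ _).1 (Real.GammaIntegral_convergent hs)
    have h2 : Integrable (fun x => β * E x) := h.congr (by filter_upwards with x; exact hpt1 x)
    have h3 := h2.const_mul β⁻¹
    have h4 : (fun x => β⁻¹ * (β * E x)) = E := by
      funext x; field_simp
    rwa [h4] at h3
  have hEval : ∫ x, E x = Real.Gamma s / β := by
    have h := sub_integral hβ (fun t => Real.exp (-t) * t ^ (s - 1))
    have h2 : Real.Gamma s = ∫ x, β * E x := by
      rw [Real.Gamma_eq_integral hs, h]
      congr 1
      funext x
      exact hpt1 x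
    rw [integral_const_mul] at h2
    rw [eq_div_iff hβ.ne', mul_comm, h2]
  -- integrability on the Gamma side with log factors
  have hg1meas : Measurable (fun t : ℝ => Real.exp (-t) * t ^ (s - 1)) :=
    (Real.measurable_exp.comp measurable_neg).mul (by fun_prop)
  have hdom := (log_abs_integrable hs).mul_const β⁻¹
  have hbound : ∀ t ∈ Set.Ioi (0:ℝ), ∀ r : ℝ, |r| = |Real.log t| →
      ‖Real.exp (-t) * t ^ (s - 1) * (r / β)‖
        ≤ Real.exp (-t) * t ^ (s - 1) * |Real.log t| * β⁻¹ := by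
    intro t ht r hr
    have ht0 : (0:ℝ) < t := ht
    have h1 : (0:ℝ) < t ^ (s - 1) := Real.rpow_pos_of_pos ht0 _
    rw [Real.norm_eq_abs, abs_mul, abs_div, abs_of_pos hβ,
      abs_of_pos (by positivity : (0:ℝ) < Real.exp (-t) * t ^ (s - 1)), hr]
    rw [div_eq_mul_inv, ← mul_assoc]
  have hlogint : IntegrableOn
      (fun t : ℝ => Real.exp (-t) * t ^ (s - 1) * (-(Real.log t) / β)) (Set.Ioi 0) := by
    refine Integrable.mono' hdom
      ((hg1meas.mul ((Real.measurable_log.neg).div_const β)).aestronglyMeasurable.restrict) ?_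
    rw [ae_restrict_iff' measurableSet_Ioi]
    filter_upwards with t ht
    exact hbound t ht _ (abs_neg _)
  have habsint : IntegrableOn
      (fun t : ℝ => Real.exp (-t) * t ^ (s - 1) * (|Real.log t| / β)) (Set.Ioi 0) := by
    refine Integrable.mono' hdom
      ((hg1meas.mul ((Real.measurable_log.abs).div_const β)).aestronglyMeasurable.restrict) ?_
    rw [ae_restrict_iff' measurableSet_Ioi]
    filter_upwards with t ht
    exact hbound t ht _ (abs_abs _)
  -- integrability and integral of x * E x
  have hx_abs_int : Integrable (fun x => |x| * E x) := by
    have h := (sub_integrable hβ _).1 habsint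
    have h2 : Integrable (fun x => β * (|x| * E x)) :=
      h.congr (by filter_upwards with x; exact hpt3 x)
    have h3 := h2.const_mul β⁻¹
    have h4 : (fun x => β⁻¹ * (β * (|x| * E x))) = fun x => |x| * E x := by
      funext x; field_simp
    rwa [h4] at h3
  have hx_int : Integrable (fun x => x * E x) := by
    refine hx_abs_int.mono' ((continuous_id.mul hEcont).aestronglyMeasurable) ?_
    filter_upwards with x
    rw [Real.norm_eq_abs, abs_mul, abs_of_pos (hEpos x)]
  have hx_val : ∫ x, x * E x = -(deriv Real.Gamma s) / (β * β) := by
    have h := sub_integral hβ (fun t => Real.exp (-t) * t ^ (s - 1) * (-(Real.log t) / β))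
    have hL : ∫ t in Set.Ioi (0:ℝ),
        Real.exp (-t) * t ^ (s - 1) * (-(Real.log t) / β)
        = -β⁻¹ * deriv Real.Gamma s := by
      rw [← deriv_Gamma_integral hs, ← integral_const_mul]
      refine setIntegral_congr_fun measurableSet_Ioi fun t _ => ?_
      rw [div_eq_mul_inv]
      ring
    have hR : (∫ x : ℝ, (β * Real.exp (-β * x)) *
        ((fun t => Real.exp (-t) * t ^ (s - 1) * (-(Real.log t) / β)) (Real.exp (-β * x))))
        = β * ∫ x, x * E x := by
      rw [← integral_const_mul]
      congr 1
      funext x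
      exact hpt2 x
    rw [hL, hR] at h
    field_simp at h ⊢
    linarith
  -- integrability of the shifted density and related functions
  have hint0 : Integrable (fun x => c * E (x - μ)) :=
    ((hint1.const_mul c).comp_sub_right μ : _)
  have hnonneg : ∀ x : ℝ, 0 ≤ c * E (x - μ) := fun x =>
    mul_nonneg hcpos.le (hEpos _).le
  have hdcont : Continuous (fun x => c * E (x - μ)) :=
    continuous_const.mul (hEcont.comp (continuous_id.sub continuous_const))
  have hnorm : c * (Real.Gamma s / β) = 1 := by
    rw [hcdef, hΓ1, hγβ]
    field_simp
  refine ⟨?_, ?_, ?_⟩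
  · -- total mass 1
    rw [hνd, withDensity_apply _ MeasurableSet.univ, Measure.restrict_univ,
      ← ofReal_integral_eq_lintegral_ofReal hint0 (Filter.Eventually.of_forall hnonneg)]
    have h2 : ∫ x, c * E (x - μ) = c * (Real.Gamma s / β) := by
      rw [integral_sub_right_eq_self (μ := (volume : Measure ℝ)) (fun y => c * E y) μ, integral_const_mul, hEval]
    rw [h2, hnorm, ENNReal.ofReal_one]
  · -- integrability of |x|
    rw [hνd, integrable_withDensity_iff (hdcont.measurable.ennreal_ofReal)
      (Filter.Eventually.of_forall fun x => ENNReal.ofReal_lt_top)]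
    have hF : Integrable (fun y => |y + μ| * (c * E y)) := by
      have hg : Integrable (fun y => c * (|y| * E y) + (c * |μ|) * E y) :=
        (hx_abs_int.const_mul c).add (hint1.const_mul (c * |μ|))
      refine hg.mono'
        (((continuous_id.add continuous_const).abs.mul
          (continuous_const.mul hEcont)).aestronglyMeasurable) ?_
      filter_upwards with y
      have h1 : 0 ≤ c * E y := mul_nonneg hcpos.le (hEpos _).le
      rw [Real.norm_eq_abs, abs_of_nonneg (mul_nonneg (abs_nonneg _) h1)]
      calc |y + μ| * (c * E y) ≤ (|y| + |μ|) * (c * E y) :=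
            mul_le_mul_of_nonneg_right (abs_add_le y μ) h1
        _ = c * (|y| * E y) + (c * |μ|) * E y := by ring
    have hF2 : Integrable (fun x => |x| * (c * E (x - μ))) := by
      have h := hF.comp_sub_right μ
      refine h.congr ?_
      filter_upwards with x
      rw [sub_add_cancel]
    refine hF2.congr ?_
    filter_upwards with x
    rw [ENNReal.toReal_ofReal (hnonneg x)]
  · -- mean zero
    rw [hνd]
    have hrw : (fun x : ℝ => ENNReal.ofReal (c * E (x - μ)))
        = fun x : ℝ => ((fun y : ℝ => Real.toNNReal (c * E (y - μ))) x : ℝ≥0∞) := rfl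
    rw [hrw, integral_withDensity_eq_integral_smul
      (hdcont.measurable.real_toNNReal) (fun x => x)]
    have hsmul : (fun x : ℝ => Real.toNNReal (c * E (x - μ)) • x)
        = fun x => (c * E (x - μ)) * x := by
      funext x
      rw [NNReal.smul_def, Real.coe_toNNReal _ (hnonneg x), smul_eq_mul]
    rw [hsmul]
    have hshift : ∫ x : ℝ, (c * E (x - μ)) * x = ∫ y : ℝ, (c * E y) * (y + μ) := by
      have h := integral_sub_right_eq_self (μ := (volume : Measure ℝ)) (fun y => (c * E y) * (y + μ)) μ
      rw [← h]
      congr 1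
      funext x
      rw [sub_add_cancel]
    rw [hshift]
    have hsplit : (fun y : ℝ => (c * E y) * (y + μ))
        = fun y => c * (y * E y) + (c * μ) * E y := by
      funext y; ring
    rw [hsplit, integral_add (hx_int.const_mul c) (hint1.const_mul (c * μ)),
      integral_const_mul, integral_const_mul, hx_val, hEval]
    rw [hμdef, hΨ, hcdef, hΓ1, hγβ]
    field_simp
    ring
end

section
/- For all β, γ > 0: ∫ e^{−βx} ν*(dx) = (γ/β) e^{−Ψ(γ/β)}. In particular, with ς = 1/γ the mean of an exponential jump of rate γ and w(x) = e^{−βx}, the asymptotic flock speed ς ∫ w(x) ν*(dx) equals β⁻¹ e^{−Ψ(γ/β)}. -/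
open MeasureTheory
open scoped ENNReal

open Set Real in
lemma gumbel_integral_s8 (β a m : ℝ) (hβ : 0 < β) (ha : 0 < a) :
    IntegrableOn (fun x => β * Real.exp (-β*(x-m)) *
      (Real.exp (-Real.exp (-β*(x-m))) * Real.exp (-β*(x-m)) ^ (a-1))) Set.univ ∧
    (∫ x, β * Real.exp (-β*(x-m)) *
      (Real.exp (-Real.exp (-β*(x-m))) * Real.exp (-β*(x-m)) ^ (a-1)))
      = Real.Gamma a := by
  set f : ℝ → ℝ := fun x => Real.exp (-β*(x-m)) with hf
  set f' : ℝ → ℝ := fun x => -β * Real.exp (-β*(x-m)) with hf'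
  set g : ℝ → ℝ := fun t => Real.exp (-t) * t ^ (a-1) with hg
  have hderiv : ∀ x ∈ Set.univ, HasDerivWithinAt f (f' x) Set.univ x := by
    intro x _
    have h1 : HasDerivAt (fun x : ℝ => -β*(x-m)) (-β) x := by
      simpa using ((hasDerivAt_id x).sub_const m).const_mul (-β)
    have h2 := h1.exp
    have : Real.exp (-β*(x-m)) * (-β) = f' x := by rw [hf']; ring
    rw [this] at h2
    exact h2.hasDerivWithinAt
  have hinj : Set.InjOn f Set.univ := by
    intro x _ y _ hxy
    have h := Real.exp_injective hxy
    have : -β * (x - m) = -β * (y - m) := h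
    have hβ' : β ≠ 0 := ne_of_gt hβ
    nlinarith [this]
  have himg : f '' Set.univ = Set.Ioi 0 := by
    ext t
    simp only [Set.image_univ, Set.mem_range, Set.mem_Ioi]
    constructor
    · rintro ⟨x, rfl⟩; exact Real.exp_pos _
    · intro ht
      refine ⟨m - Real.log t / β, ?_⟩
      show Real.exp (-β * (m - Real.log t / β - m)) = t
      have : -β * (m - Real.log t / β - m) = Real.log t := by field_simp; ring
      rw [this, Real.exp_log ht]
  have hkey : ∀ x : ℝ, |f' x| • g (f x) = β * Real.exp (-β*(x-m)) *
      (Real.exp (-Real.exp (-β*(x-m))) * Real.exp (-β*(x-m)) ^ (a-1)) := by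
    intro x
    rw [smul_eq_mul, hf', hg]
    simp only []
    rw [abs_mul, abs_neg, abs_of_pos hβ, abs_of_pos (Real.exp_pos _)]
  have hGi := Real.GammaIntegral_convergent ha
  constructor
  · have := (integrableOn_image_iff_integrableOn_abs_deriv_smul MeasurableSet.univ
      hderiv hinj g).mp (by rwa [himg])
    refine this.congr_fun ?_ MeasurableSet.univ
    intro x _
    exact hkey x
  · have := integral_image_eq_integral_abs_deriv_smul MeasurableSet.univ hderiv hinj g
    rw [himg] at this
    rw [Real.Gamma_eq_integral ha]
    rw [this]
    simp only [Measure.restrict_univ] at *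
    exact (integral_congr_ae (Filter.Eventually.of_forall fun x => (hkey x).symm))

/-- `∫ e^{-βx} ν*(dx) = (γ/β) e^{-Ψ(γ/β)}`; in particular, with `ς = 1/γ`
and `w(x) = e^{-βx}`, the asymptotic flock speed `ς ∫ w dν*` equals `β⁻¹ e^{-Ψ(γ/β)}`. -/
theorem nustar_speed
    (β γ : ℝ) (hβ : 0 < β) (hγ : 0 < γ)
    (Ψ : ℝ → ℝ) (hΨ : ∀ a, Ψ a = deriv Real.Gamma a / Real.Gamma a)
    (ν : Measure ℝ)
    (hν : ν = volume.withDensity (fun x => ENNReal.ofReal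
      ((γ / Real.Gamma (1 + γ / β)) * Real.exp
        (-γ * (x - β⁻¹ * Ψ (γ / β)) - Real.exp (-β * (x - β⁻¹ * Ψ (γ / β))))))) :
    Integrable (fun x => Real.exp (-β * x)) ν ∧
    (∫ x, Real.exp (-β * x) ∂ν) = (γ / β) * Real.exp (-Ψ (γ / β)) ∧
    (1 / γ) * (∫ x, Real.exp (-β * x) ∂ν) = β⁻¹ * Real.exp (-Ψ (γ / β)) := by
  have hβ' : β ≠ 0 := ne_of_gt hβ
  have hγ' : γ ≠ 0 := ne_of_gt hγ
  set m : ℝ := β⁻¹ * Ψ (γ / β) with hm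
  have hΓpos : 0 < Real.Gamma (1 + γ / β) := Real.Gamma_pos_of_pos (by positivity)
  set C : ℝ := γ / Real.Gamma (1 + γ / β) with hC
  have hCpos : 0 < C := by positivity
  set d : ℝ → ℝ := fun x => C * Real.exp (-γ * (x - m) - Real.exp (-β * (x - m))) with hd
  have hdpos : ∀ x, 0 < d x := fun x => by positivity
  have ha : (0:ℝ) < γ / β + 1 := by positivity
  set k : ℝ := C * Real.exp (-β * m) / β with hk
  have hpt : ∀ x, Real.exp (-β * x) * d x = k * (β * Real.exp (-β*(x-m)) *
      (Real.exp (-Real.exp (-β*(x-m))) * Real.exp (-β*(x-m)) ^ ((γ/β+1)-1))) := by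
    intro x
    rw [show (γ/β+1)-1 = γ/β by ring, ← Real.exp_mul,
      show -β*(x-m)*(γ/β) = -γ*(x-m) by field_simp, hd, hk]
    simp only []
    rw [sub_eq_add_neg, Real.exp_add,
      show -β*x = -β*m + -β*(x-m) by ring, Real.exp_add]
    field_simp
  obtain ⟨hGint, hGval⟩ := gumbel_integral_s8 β (γ/β+1) m hβ ha
  rw [MeasureTheory.integrableOn_univ] at hGint
  have hInt : Integrable (fun x => Real.exp (-β * x) * d x) volume := by
    have := hGint.const_mul k
    exact this.congr (Filter.Eventually.of_forall fun x => (hpt x).symm)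
  have hIval : (∫ x, Real.exp (-β * x) * d x) = k * Real.Gamma (γ/β+1) := by
    rw [show (fun x => Real.exp (-β * x) * d x) = fun x => k * (β * Real.exp (-β*(x-m)) *
      (Real.exp (-Real.exp (-β*(x-m))) * Real.exp (-β*(x-m)) ^ ((γ/β+1)-1))) from
      funext hpt, integral_const_mul, hGval]
  have hmeasd : Measurable d := by fun_prop
  have hdens : (fun x => ENNReal.ofReal (d x)) = fun x => ((fun x => (d x).toNNReal) x : ℝ≥0∞) := rfl
  have hβm : β * m = Ψ (γ / β) := by rw [hm]; field_simp
  have hval2 : k * Real.Gamma (γ/β+1) = (γ / β) * Real.exp (-Ψ (γ / β)) := by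
    rw [hk, hC, show (γ/β+1 : ℝ) = 1 + γ/β by ring, ← hβm]
    field_simp
  have hInt' : Integrable (fun x => Real.exp (-β * x)) ν := by
    rw [hν, integrable_withDensity_iff (by fun_prop)
      (Filter.Eventually.of_forall fun x => ENNReal.ofReal_lt_top)]
    refine hInt.congr (Filter.Eventually.of_forall fun x => ?_)
    show Real.exp (-β * x) * d x = Real.exp (-β * x) * (ENNReal.ofReal (d x)).toReal
    rw [ENNReal.toReal_ofReal (hdpos x).le]
  refine ⟨hInt', ?_, ?_⟩
  · rw [hν, hdens, integral_withDensity_eq_integral_smul (by fun_prop)]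
    rw [show (fun x => (d x).toNNReal • Real.exp (-β * x)) = fun x => Real.exp (-β * x) * d x by
      funext x
      rw [NNReal.smul_def, Real.coe_toNNReal _ (hdpos x).le, smul_eq_mul]; ring]
    rw [hIval, hval2]
  · rw [hν, hdens, integral_withDensity_eq_integral_smul (by fun_prop)]
    rw [show (fun x => (d x).toNNReal • Real.exp (-β * x)) = fun x => Real.exp (-β * x) * d x by
      funext x
      rw [NNReal.smul_def, Real.coe_toNNReal _ (hdpos x).le, smul_eq_mul]; ring]
    rw [hIval, hval2]
    field_simp
end

section
/- For t ≥ 0 let ν*(t) be the Borel probability measure on ℝ whose cumulative distribution function is F*(t,·). Then for every x ∈ ℝ and every t > 0 at which Θ is differentiable with Θ'(t) = θ(t), the partial derivative ∂F*/∂t(t,x) exists and satisfies ∂F*/∂t(t,x) = −e^{−γx} ∫_{(−∞,x]} e^{(γ−β)y} ν*(t,dy) + γ⁻¹ θ(t) · ∂F*/∂x(t,x). -/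
open MeasureTheory Filter Set Topology
open scoped ENNReal

/-- Generic integrability on `Iic` of `exp (c*y - a*exp (-β*y))`. -/
lemma aux_integrableOn {β a : ℝ} (hβ : 0 < β) (ha : 0 < a) (c z : ℝ) :
    IntegrableOn (fun y => Real.exp (c * y - a * Real.exp (-β * y))) (Iic z) := by
  have hcont : Continuous fun y => Real.exp (c * y - a * Real.exp (-β * y)) := by
    continuity
  set K : ℝ := 4 * (1 + |c|) / (a * β) + 1 with hK
  have hKpos : 0 < K := by positivity
  have haβK : a * β * K = 4 * (1 + |c|) + a * β := by
    rw [hK]; field_simp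
  set y₂ : ℝ := min z (-(K / β)) with hy₂
  have h1 : IntegrableOn (fun y => Real.exp (c * y - a * Real.exp (-β * y))) (Iic y₂) := by
    refine Integrable.mono (integrableOn_exp_Iic y₂) hcont.aestronglyMeasurable.restrict ?_
    refine (ae_restrict_iff' measurableSet_Iic).2 (ae_of_all _ fun y hy => ?_)
    simp only [Real.norm_eq_abs, Real.abs_exp]
    apply Real.exp_le_exp.2
    have hy' : y ≤ -(K / β) := le_trans hy (min_le_right _ _)
    have hy0 : y < 0 := by
      have : 0 < K / β := by positivity
      linarith
    set u : ℝ := -β * y with hu'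
    have hu : K ≤ u := by
      have h := mul_le_mul_of_nonneg_left hy' hβ.le
      have hKβ : β * (K / β) = K := by field_simp
      rw [mul_neg, hKβ] at h
      rw [hu']; linarith
    have hupos : 0 < u := lt_of_lt_of_le hKpos hu
    have hexpu : u ^ 2 / 4 ≤ Real.exp u := by
      have h : u / 2 ≤ Real.exp (u / 2) := by linarith [Real.add_one_le_exp (u / 2)]
      have h2 : (u / 2) * (u / 2) ≤ Real.exp (u / 2) * Real.exp (u / 2) :=
        mul_le_mul h h (by positivity) (Real.exp_nonneg _)
      calc u ^ 2 / 4 = (u / 2) * (u / 2) := by ring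
        _ ≤ Real.exp (u / 2) * Real.exp (u / 2) := h2
        _ = Real.exp u := by rw [← Real.exp_add]; ring_nf
    have step1 : (c - 1) * y ≤ (1 + |c|) * (u / β) := by
      have h3 : |c - 1| ≤ 1 + |c| := by
        calc |c - 1| ≤ |c| + |(1:ℝ)| := abs_sub _ _
          _ = 1 + |c| := by rw [abs_one]; ring
      calc (c - 1) * y ≤ |(c - 1) * y| := le_abs_self _
        _ = |c - 1| * |y| := abs_mul _ _
        _ = |c - 1| * (-y) := by rw [abs_of_neg hy0]
        _ ≤ (1 + |c|) * (-y) := mul_le_mul_of_nonneg_right h3 (by linarith)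
        _ = (1 + |c|) * (u / β) := by rw [hu']; field_simp
    have step2 : (1 + |c|) * (u / β) ≤ a * (u ^ 2 / 4) := by
      have he : (1 + |c|) * (u / β) = ((1 + |c|) * u) / β := by ring
      rw [he, div_le_iff₀ hβ]
      nlinarith [mul_le_mul_of_nonneg_left hu hupos.le, haβK, hupos, ha, hβ,
        abs_nonneg c, mul_pos ha hβ]
    have step3 : a * (u ^ 2 / 4) ≤ a * Real.exp u := mul_le_mul_of_nonneg_left hexpu ha.le
    linarith
  have h2 : IntegrableOn (fun y => Real.exp (c * y - a * Real.exp (-β * y))) (Icc y₂ z) :=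
    hcont.continuousOn.integrableOn_Icc
  have hsub : Iic z ⊆ Iic y₂ ∪ Icc y₂ z := by
    intro w hw
    rcases le_or_gt w y₂ with h | h
    · exact Or.inl h
    · exact Or.inr ⟨h.le, hw⟩
  exact (h1.union h2).mono_set hsub

/-- FTC for the primitive `w ↦ ∫_{Iic w} g`. -/
lemma aux_hasDerivAt_primitive {g : ℝ → ℝ} (hg : Continuous g)
    (hint : ∀ z, IntegrableOn g (Iic z)) (z : ℝ) :
    HasDerivAt (fun w => ∫ y in Iic w, g y) (g z) z := by
  have key : ∀ w, (∫ y in Iic w, g y) = (∫ y in Iic 0, g y) + ∫ y in (0:ℝ)..w, g y := by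
    intro w
    rw [← intervalIntegral.integral_Iic_sub_Iic (hint 0) (hint w)]; ring
  have h : HasDerivAt (fun w => ∫ y in (0:ℝ)..w, g y) (g z) z :=
    intervalIntegral.integral_hasDerivAt_right (hg.intervalIntegrable _ _)
      (hg.stronglyMeasurableAtFilter _ _) hg.continuousAt
  exact (h.const_add (∫ y in Iic 0, g y)).congr_of_eventuallyEq
    (Filter.Eventually.of_forall key)

/-- Explicit improper integral. -/
lemma aux_integral_Iic {β a : ℝ} (hβ : 0 < β) (ha : 0 < a) (b : ℝ) :
    (∫ y in Iic b, Real.exp (-β * y - a * Real.exp (-β * y)))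
      = (β * a)⁻¹ * Real.exp (-(a * Real.exp (-β * b))) := by
  have hderiv : ∀ y ∈ Iic b,
      HasDerivAt (fun w => (β * a)⁻¹ * Real.exp (-(a * Real.exp (-β * w))))
        (Real.exp (-β * y - a * Real.exp (-β * y))) y := by
    intro y _
    have h1 : HasDerivAt (fun w : ℝ => -β * w) (-β) y := by
      simpa using (hasDerivAt_id y).const_mul (-β)
    have h2 : HasDerivAt (fun w : ℝ => Real.exp (-β * w))
        (Real.exp (-β * y) * (-β)) y := h1.exp
    have h3 : HasDerivAt (fun w : ℝ => -(a * Real.exp (-β * w)))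
        (-(a * (Real.exp (-β * y) * (-β)))) y := (h2.const_mul a).neg
    have h4 := (h3.exp).const_mul ((β * a)⁻¹)
    refine h4.congr_deriv ?_
    rw [show -β * y - a * Real.exp (-β * y)
        = (-β * y) + (-(a * Real.exp (-β * y))) from by ring, Real.exp_add]
    field_simp
  have hint : IntegrableOn
      (fun y => Real.exp (-β * y - a * Real.exp (-β * y))) (Iic b) := by
    have := aux_integrableOn hβ ha (-β) b
    simpa using this
  have htend : Tendsto (fun w => (β * a)⁻¹ * Real.exp (-(a * Real.exp (-β * w))))
      atBot (𝓝 0) := by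
    have t1 : Tendsto (fun w : ℝ => -β * w) atBot atTop := by
      have := tendsto_neg_atBot_atTop.const_mul_atTop hβ
      simpa [mul_neg, neg_mul] using this
    have t2 : Tendsto (fun w : ℝ => Real.exp (-β * w)) atBot atTop :=
      Real.tendsto_exp_atTop.comp t1
    have t3 : Tendsto (fun w : ℝ => -(a * Real.exp (-β * w))) atBot atBot :=
      tendsto_neg_atTop_atBot.comp (t2.const_mul_atTop ha)
    have t4 : Tendsto (fun w : ℝ => Real.exp (-(a * Real.exp (-β * w)))) atBot (𝓝 0) :=
      Real.tendsto_exp_atBot.comp t3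
    have := t4.const_mul ((β * a)⁻¹)
    simpa using this
  have := integral_Iic_of_hasDerivAt_of_tendsto' hderiv hint htend
  rw [this, sub_zero]

/-- Translation of a set integral on `Iic`. -/
lemma aux_translate (g : ℝ → ℝ) (c z : ℝ) :
    (∫ y in Iic (z + c), g y) = ∫ y in Iic z, g (y + c) := by
  have h := (measurePreserving_add_right volume c).setIntegral_preimage_emb
      (measurableEmbedding_addRight c) g (Iic (z + c))
  have hpre : (fun x => x + c) ⁻¹' (Iic (z + c)) = Iic z := by
    ext w; simp
  rw [← h, hpre]

/-- at every `t > 0` where `Θ` is differentiable with `Θ'(t) = θ(t)`, the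
time partial derivative of `F*` exists and satisfies the PDE
`∂F*/∂t(t,x) = -e^{-γx} ∫_{(-∞,x]} e^{(γ-β)y} ν*(t,dy) + γ⁻¹ θ(t) ∂F*/∂x(t,x)`,
where `ν*(t)` is the probability measure with cdf `F*(t,·)`. -/
theorem Fstar_pde
    (β γ : ℝ) (hβ : 0 < β) (hβγ : β ≤ γ)
    (θ : ℝ → ℝ) (hθmeas : Measurable θ) (hθnonneg : ∀ s, 0 ≤ θ s)
    (hθloc : ∀ t : ℝ, IntegrableOn θ (Set.Icc 0 t))
    (Θ : ℝ → ℝ) (hΘ : ∀ t, Θ t = ∫ s in (0:ℝ)..t, θ s)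
    (ζ : ℝ → ℝ → ℝ)
    (hζ : ∀ x t, ζ x t = x + γ⁻¹ * Θ t
      - β⁻¹ * Real.log (1 + ∫ s in (0:ℝ)..t, Real.exp (β * γ⁻¹ * Θ s)))
    (F : ℝ → ℝ → ℝ)
    (hF : ∀ t x, F t x = (γ / Real.Gamma (1 + γ / β))
      * ∫ y in Set.Iic (ζ x t), Real.exp (-γ * y - Real.exp (-β * y)))
    (ν : ℝ → Measure ℝ)
    (hνprob : ∀ t, IsProbabilityMeasure (ν t))
    (hνcdf : ∀ t x, (ν t (Set.Iic x)).toReal = F t x)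
    (x t : ℝ) (ht : 0 < t) (hΘdiff : HasDerivAt Θ (θ t) t) :
    HasDerivAt (fun τ => F τ x)
      (-Real.exp (-γ * x) * (∫ y in Set.Iic x, Real.exp ((γ - β) * y) ∂(ν t))
        + γ⁻¹ * θ t * deriv (fun x' => F t x') x) t := by
  have hγ : 0 < γ := hβ.trans_le hβγ
  set C : ℝ := γ / Real.Gamma (1 + γ / β) with hCdef
  have hC : 0 < C := div_pos hγ (Real.Gamma_pos_of_pos (by positivity))
  set g : ℝ → ℝ := fun y => Real.exp (-γ * y - Real.exp (-β * y)) with hgdef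
  have hgcont : Continuous g := by fun_prop
  have hgpos : ∀ y, 0 < g y := fun y => Real.exp_pos _
  have hgint : ∀ z, IntegrableOn g (Iic z) := by
    intro z
    have := aux_integrableOn hβ one_pos (-γ) z
    simpa [hgdef] using this
  -- the primitive
  set G : ℝ → ℝ := fun w => ∫ y in Iic w, g y with hGdef
  have hGderiv : ∀ z, HasDerivAt G (g z) z := aux_hasDerivAt_primitive hgcont hgint
  -- the shift function
  set L : ℝ → ℝ := fun τ => γ⁻¹ * Θ τ
      - β⁻¹ * Real.log (1 + ∫ s in (0:ℝ)..τ, Real.exp (β * γ⁻¹ * Θ s)) with hLdef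
  have hζL : ∀ x' τ, ζ x' τ = x' + L τ := by
    intro x' τ; rw [hζ, hLdef]; ring
  set c : ℝ := L t with hcdef
  set I : ℝ := ∫ s in (0:ℝ)..t, Real.exp (β * γ⁻¹ * Θ s) with hIdef
  have hI : 0 ≤ I := by
    rw [hIdef]
    exact intervalIntegral.integral_nonneg ht.le fun s _ => (Real.exp_pos _).le
  have h1I : (0:ℝ) < 1 + I := by linarith
  set E : ℝ := Real.exp (β * γ⁻¹ * Θ t) with hEdef
  -- derivative of the inner time integral
  have hΘcont : ContinuousOn Θ (Icc 0 (t + 1)) := by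
    have h := intervalIntegral.continuousOn_primitive (μ := volume) (hθloc (t + 1))
    apply h.congr
    intro s hs
    rw [hΘ s, intervalIntegral.integral_of_le hs.1]
  have hfcont : ContinuousOn (fun s => Real.exp (β * γ⁻¹ * Θ s)) (Icc 0 (t + 1)) :=
    (Real.continuous_exp.comp_continuousOn (hΘcont.const_smul (β * γ⁻¹)))
  have htmem : t ∈ Ioo (0:ℝ) (t + 1) := ⟨ht, lt_add_one t⟩
  have hfcont' : ContinuousOn (fun s => Real.exp (β * γ⁻¹ * Θ s)) (Ioo (0:ℝ) (t + 1)) :=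
    hfcont.mono Ioo_subset_Icc_self
  have hIderiv : HasDerivAt (fun τ => ∫ s in (0:ℝ)..τ, Real.exp (β * γ⁻¹ * Θ s)) E t := by
    refine intervalIntegral.integral_hasDerivAt_right ?_ ?_ ?_
    · apply ContinuousOn.intervalIntegrable
      apply hfcont.mono
      rw [uIcc_of_le ht.le]
      exact Icc_subset_Icc le_rfl (by linarith)
    · exact hfcont'.stronglyMeasurableAtFilter isOpen_Ioo t htmem
    · exact hfcont'.continuousAt (isOpen_Ioo.mem_nhds htmem)
  have hlog : HasDerivAt
      (fun τ => Real.log (1 + ∫ s in (0:ℝ)..τ, Real.exp (β * γ⁻¹ * Θ s)))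
      (E / (1 + I)) t := by
    have := ((hIderiv.const_add 1).log (by rw [← hIdef]; exact h1I.ne'))
    simpa [← hIdef] using this
  set L' : ℝ := γ⁻¹ * θ t - β⁻¹ * (E / (1 + I)) with hL'def
  have hLderiv : HasDerivAt L L' t := by
    exact (hΘdiff.const_mul γ⁻¹).sub (hlog.const_mul β⁻¹)
  -- time derivative of F
  have hFt : HasDerivAt (fun τ => F τ x) (C * (g (x + c) * L')) t := by
    have hcomp : HasDerivAt (fun τ => G (x + L τ)) (g (x + c) * L') t := by
      have hinner : HasDerivAt (fun τ => x + L τ) L' t := hLderiv.const_add x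
      exact (hGderiv (x + c)).comp t hinner
    have := hcomp.const_mul C
    apply this.congr_of_eventuallyEq
    filter_upwards with τ
    rw [hF, hζL]
  -- space derivative of F
  have hFx : HasDerivAt (fun x' => F t x') (C * g (x + c)) x := by
    have hinner : HasDerivAt (fun x' : ℝ => x' + c) 1 x := (hasDerivAt_id x).add_const c
    have hcomp : HasDerivAt (fun x' => G (x' + c)) (g (x + c) * 1) x :=
      by have := (hGderiv (x + c)).comp x hinner; exact this
    have := hcomp.const_mul C
    apply (by simpa using this : HasDerivAt (fun x' => C * G (x' + c)) (C * g (x + c)) x).congr_of_eventuallyEq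
    filter_upwards with x'
    rw [hF, hζL, hcdef]
  have hderivx : deriv (fun x' => F t x') x = C * g (x + c) := hFx.deriv
  -- the measure with density
  set a : ℝ := Real.exp (-β * c) with hadef
  have ha : 0 < a := Real.exp_pos _
  have hsplit : ∀ y, C * g (y + c)
      = (C * Real.exp (-γ * c)) * Real.exp (-γ * y - a * Real.exp (-β * y)) := by
    intro y
    rw [hgdef]
    simp only []
    rw [hadef, ← Real.exp_add, mul_assoc, ← Real.exp_add]
    congr 2
    rw [show -β * (y + c) = -β * c + -β * y from by ring, Real.exp_add]
    ring
  have hgc_int : Integrable (fun y => C * g (y + c)) := by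
    rw [← integrableOn_univ, ← Iic_union_Ioi (a := (0:ℝ))]
    apply IntegrableOn.union
    · have h := (aux_integrableOn hβ ha (-γ) 0).const_mul (C * Real.exp (-γ * c))
      exact h.congr (ae_of_all _ fun y => (hsplit y).symm)
    · have hbase : IntegrableOn (fun y => Real.exp (-γ * y)) (Ioi (0:ℝ)) :=
        exp_neg_integrableOn_Ioi 0 hγ
      have h := hbase.const_mul (C * Real.exp (-γ * c))
      refine Integrable.mono h ?_ ?_
      · exact (continuous_const.mul (hgcont.comp (continuous_id.add continuous_const))).aestronglyMeasurable.restrict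
      · refine ae_of_all _ fun y => ?_
        simp only [Real.norm_eq_abs]
        rw [abs_of_nonneg (by positivity), abs_of_nonneg (by positivity)]
        rw [hgdef]
        simp only []
        have : Real.exp (-γ * (y + c) - Real.exp (-β * (y + c)))
            ≤ Real.exp (-γ * (y + c)) := by
          apply Real.exp_le_exp.2
          have := Real.exp_pos (-β * (y + c))
          linarith
        calc C * Real.exp (-γ * (y + c) - Real.exp (-β * (y + c)))
            ≤ C * Real.exp (-γ * (y + c)) := by nlinarith
          _ = C * Real.exp (-γ * c) * Real.exp (-γ * y) := by
              rw [mul_assoc, ← Real.exp_add]; ring_nf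
  set μ : Measure ℝ := volume.withDensity (fun y => ENNReal.ofReal (C * g (y + c)))
    with hμdef
  haveI : IsFiniteMeasure μ := isFiniteMeasure_withDensity_ofReal hgc_int.hasFiniteIntegral
  haveI := hνprob t
  haveI : IsFiniteMeasure (ν t) := inferInstance
  have hμIic : ∀ z, μ (Iic z) = ENNReal.ofReal (F t z) := by
    intro z
    rw [hμdef, withDensity_apply _ measurableSet_Iic,
      ← ofReal_integral_eq_lintegral_ofReal hgc_int.integrableOn
        (ae_of_all _ fun y => by positivity)]
    congr 1
    rw [hF, hζL, integral_const_mul, ← hcdef, aux_translate]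
  have hνμ : ν t = μ := by
    refine Measure.ext_of_Iic (ν t) μ fun z => ?_
    rw [hμIic z, ← hνcdf t z, ENNReal.ofReal_toReal (measure_ne_top _ _)]
  -- compute the weighted integral
  have hweight : (∫ y in Set.Iic x, Real.exp ((γ - β) * y) ∂(ν t))
      = (C * Real.exp (-γ * c)) * ((β * a)⁻¹ * Real.exp (-(a * Real.exp (-β * x)))) := by
    rw [hνμ, hμdef]
    have hmeas : Measurable fun y => (C * g (y + c)).toNNReal :=
      (continuous_const.mul (hgcont.comp (continuous_id.add continuous_const))).measurable.real_toNNReal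
    have hcoe : (fun y => ENNReal.ofReal (C * g (y + c)))
        = fun y => ((fun y => (C * g (y + c)).toNNReal) y : ℝ≥0∞) := rfl
    rw [hcoe, setIntegral_withDensity_eq_setIntegral_smul hmeas _ measurableSet_Iic]
    have hpt : ∀ y, ((C * g (y + c)).toNNReal : ℝ) • Real.exp ((γ - β) * y)
        = (C * Real.exp (-γ * c)) * Real.exp (-β * y - a * Real.exp (-β * y)) := by
      intro y
      rw [smul_eq_mul, Real.coe_toNNReal _ (by positivity)]
      rw [hgdef]
      simp only []
      rw [hadef, mul_assoc, ← Real.exp_add, mul_assoc, ← Real.exp_add]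
      congr 2
      rw [show -β * (y + c) = -β * c + -β * y from by ring, Real.exp_add]
      ring
    calc (∫ y in Iic x, (C * g (y + c)).toNNReal • Real.exp ((γ - β) * y))
        = ∫ y in Iic x, (C * Real.exp (-γ * c))
            * Real.exp (-β * y - a * Real.exp (-β * y)) := by
          refine setIntegral_congr_fun measurableSet_Iic fun y _ => ?_
          exact hpt y
      _ = (C * Real.exp (-γ * c)) * ((β * a)⁻¹ * Real.exp (-(a * Real.exp (-β * x)))) := by
          rw [integral_const_mul, aux_integral_Iic hβ ha x]
  -- final identities
  have hc_eq : c = γ⁻¹ * Θ t - β⁻¹ * Real.log (1 + I) := rfl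
  have hexpβc : E / (1 + I) = a⁻¹ := by
    have h1 : a⁻¹ = Real.exp (β * c) := by
      rw [hadef, ← Real.exp_neg]; congr 1; ring
    have h2 : β * c = β * γ⁻¹ * Θ t - Real.log (1 + I) := by
      rw [hc_eq]; field_simp
    rw [h1, h2, Real.exp_sub, Real.exp_log h1I, hEdef]
  have hgxc : g (x + c) = Real.exp (-γ * x) * Real.exp (-γ * c)
      * Real.exp (-(a * Real.exp (-β * x))) := by
    rw [hgdef]
    simp only []
    rw [hadef, mul_assoc, ← Real.exp_add, ← Real.exp_add]
    congr 1
    rw [show -β * (x + c) = -β * c + -β * x from by ring, Real.exp_add]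
    ring
  -- conclude
  rw [hweight, hderivx]
  convert hFt using 1
  rw [hL'def, hgxc, hexpβc]
  have hβa : (β * a)⁻¹ = β⁻¹ * a⁻¹ := by rw [mul_inv]
  rw [hβa]
  ring
end

section
/- Suppose m₁ := E[Z₁] ∈ (0,∞) and let K ∈ (0,∞) satisfy E[Z₁ · 1{Z₁ > K}] ≤ m₁/4. Then the first-passage times τ(x) := ξ(x) + 1 satisfy E[τ(x)] ≤ 2K/m₁ + 8Kx/m₁² + 1 for every x ≥ 0. -/
open MeasureTheory ProbabilityTheory Filter Set
open scoped ENNReal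

/-- for i.i.d. strictly positive `Z i` with mean `m₁ ∈ (0,∞)` and `K` with
`E[Z₁ 1{Z₁ > K}] ≤ m₁/4`, the first-passage times `τ(x) = ξ(x) + 1` of the renewal process
satisfy `E[τ(x)] ≤ 2K/m₁ + 8Kx/m₁² + 1` for every `x ≥ 0`. -/
theorem renewal_first_passage_mean_bound
    {Ω : Type*} [MeasurableSpace Ω] (μ : Measure Ω) [IsProbabilityMeasure μ]
    (Z : ℕ → Ω → ℝ)
    (hmeas : ∀ i, Measurable (Z i))
    (hindep : iIndepFun Z μ)
    (hident : ∀ i, IdentDistrib (Z i) (Z 0) μ μ)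
    (hpos : ∀ i ω, 0 < Z i ω)
    (hint : Integrable (Z 0) μ)
    (m₁ : ℝ) (hm₁ : m₁ = ∫ ω, Z 0 ω ∂μ) (hm₁pos : 0 < m₁)
    (K : ℝ) (hK : 0 < K)
    (hKbig : (∫ ω in {ω | K < Z 0 ω}, Z 0 ω ∂μ) ≤ m₁ / 4)
    (S : ℕ → Ω → ℝ) (hS : ∀ k ω, S k ω = ∑ i ∈ Finset.range k, Z i ω)
    (ξ : ℝ → Ω → ℕ) (hξ : ∀ t ω, ξ t ω = sSup {k : ℕ | S k ω ≤ t})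
    (τ : ℝ → Ω → ℕ) (hτ : ∀ x ω, τ x ω = ξ x ω + 1)
    (x : ℝ) (hx : 0 ≤ x) :
    (∫⁻ ω, (τ x ω : ℝ≥0∞) ∂μ)
      ≤ ENNReal.ofReal (2 * K / m₁ + 8 * K * x / m₁ ^ 2 + 1) := by
  classical
  -- basic measurability
  have hSmeas : ∀ k, Measurable (S k) := by
    intro k
    have : S k = fun ω => ∑ i ∈ Finset.range k, Z i ω := by funext ω; exact hS k ω
    rw [this]
    exact Finset.measurable_sum _ (fun i _ => hmeas i)
  set A : ℕ → Set Ω := fun k => {ω | S k ω ≤ x} with hA_def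
  have hA : ∀ k, MeasurableSet (A k) := fun k => measurableSet_le (hSmeas k) measurable_const
  -- monotonicity of S
  have hSmono : ∀ ω, Monotone (fun k => S k ω) := by
    intro ω
    apply monotone_nat_of_le_succ
    intro k
    rw [hS, hS, Finset.sum_range_succ]
    exact le_add_of_nonneg_right (hpos k ω).le
  -- if k < τ x ω then S k ω ≤ x
  have hkey : ∀ k ω, k < τ x ω → S k ω ≤ x := by
    intro k ω h
    rw [hτ, hξ] at h
    have hk : k ≤ sSup {j : ℕ | S j ω ≤ x} := Nat.lt_succ_iff.mp h
    by_cases hb : BddAbove {j : ℕ | S j ω ≤ x}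
    · have hne : {j : ℕ | S j ω ≤ x}.Nonempty := by
        refine ⟨0, ?_⟩
        simp only [Set.mem_setOf_eq, hS]
        simpa using hx
      have hmem := Nat.sSup_mem hne hb
      exact le_trans (hSmono ω hk) hmem
    · obtain ⟨j, hj, hkj⟩ := (not_bddAbove_iff.mp hb) k
      exact le_trans (hSmono ω hkj.le) hj
  -- truncated variables
  set W : ℕ → Ω → ℝ := fun k ω => min (Z k ω) K with hW_def
  have hWmeas : ∀ k, Measurable (W k) := fun k => (hmeas k).min measurable_const
  have hWnonneg : ∀ k ω, 0 ≤ W k ω := fun k ω => le_min (hpos k ω).le hK.le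
  have hWleK : ∀ k ω, W k ω ≤ K := fun k ω => min_le_right _ _
  have hWint : ∀ k, Integrable (W k) μ := by
    intro k
    refine Integrable.mono' (integrable_const K) (hWmeas k).aestronglyMeasurable ?_
    filter_upwards with ω
    rw [Real.norm_eq_abs, abs_of_nonneg (hWnonneg k ω)]
    exact hWleK k ω
  set mbar : ℝ := ∫ ω, W 0 ω ∂μ with hmbar_def
  have hWeq : ∀ k, (∫ ω, W k ω ∂μ) = mbar := by
    intro k
    have : IdentDistrib (W k) (W 0) μ μ :=
      (hident k).comp (measurable_id.min measurable_const)
    exact this.integral_eq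
  -- lower bound on mbar
  have hset : MeasurableSet {ω | K < Z 0 ω} := measurableSet_lt measurable_const (hmeas 0)
  have hmbar_ge : 3 * m₁ / 4 ≤ mbar := by
    have hpt : ∀ ω, Z 0 ω - ({ω | K < Z 0 ω}).indicator (Z 0) ω ≤ W 0 ω := by
      intro ω
      by_cases h : K < Z 0 ω
      · rw [Set.indicator_of_mem (show ω ∈ {ω | K < Z 0 ω} from h), sub_self]
        exact hWnonneg 0 ω
      · rw [Set.indicator_of_notMem (show ω ∉ {ω | K < Z 0 ω} from h), sub_zero]
        exact le_min le_rfl (not_lt.mp h)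
    have hind_int : Integrable (({ω | K < Z 0 ω}).indicator (Z 0)) μ := hint.indicator hset
    have := integral_mono (hint.sub hind_int) (hWint 0) hpt
    simp only [Pi.sub_apply] at this
    rw [integral_sub hint hind_int, integral_indicator hset] at this
    rw [hmbar_def]
    rw [hm₁]
    linarith [hKbig, hm₁ ▸ this]
  have hmbar_pos : 0 < mbar := lt_of_lt_of_le (by linarith) hmbar_ge
  -- m₁ ≤ 6 K
  have hm6K : m₁ ≤ 6 * K := by
    have hsplit : (∫ ω in {ω | K < Z 0 ω}, Z 0 ω ∂μ)
        + (∫ ω in {ω | K < Z 0 ω}ᶜ, Z 0 ω ∂μ) = ∫ ω, Z 0 ω ∂μ :=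
      integral_add_compl hset hint
    have hcompl_le : (∫ ω in {ω | K < Z 0 ω}ᶜ, Z 0 ω ∂μ) ≤ K := by
      have h1 : (∫ ω in {ω | K < Z 0 ω}ᶜ, Z 0 ω ∂μ)
          ≤ ∫ _ω in {ω | K < Z 0 ω}ᶜ, K ∂μ := by
        refine setIntegral_mono_on hint.integrableOn ((integrableOn_const_iff).mpr ?_)
          hset.compl ?_
        · right; exact measure_lt_top μ _
        · intro ω hω
          exact not_lt.mp hω
      have h2 : (∫ _ω in {ω | K < Z 0 ω}ᶜ, K ∂μ) ≤ K := by
        rw [setIntegral_const, smul_eq_mul, measureReal_def]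
        nlinarith [ENNReal.toReal_le_of_le_ofReal zero_le_one
          (by simpa using prob_le_one (μ := μ) (s := {ω | K < Z 0 ω}ᶜ)),
          ENNReal.toReal_nonneg (a := μ {ω | K < Z 0 ω}ᶜ)]
      linarith
    have := hm₁ ▸ hsplit
    linarith [hKbig]
  -- the Wald-type functions
  set f : ℕ → Ω → ℝ := fun k => (A k).indicator (W k) with hf_def
  have hfint : ∀ k, Integrable (f k) μ := fun k => (hWint k).indicator (hA k)
  have hfnonneg : ∀ k ω, 0 ≤ f k ω := by
    intro k ω
    exact Set.indicator_nonneg (fun ω' _ => hWnonneg k ω') ω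
  -- the integral of f k via independence
  have hfint_eq : ∀ k, (∫ ω, f k ω ∂μ) = (μ (A k)).toReal * mbar := by
    intro k
    set I : Ω → ℝ := fun ω => if S k ω ≤ x then 1 else 0 with hI_def
    have hfIW : f k = I * W k := by
      funext ω
      by_cases h : S k ω ≤ x
      · simp [hf_def, hI_def, Set.indicator_of_mem, h, hA_def, Set.mem_setOf_eq]
      · simp [hf_def, hI_def, Set.indicator_of_notMem, h, hA_def, Set.mem_setOf_eq]
    have hSsum : S k = ∑ j ∈ Finset.range k, Z j := by
      funext ω
      rw [hS]
      simp
    have hIndSZ : IndepFun (S k) (Z k) μ := by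
      rw [hSsum]
      exact hindep.indepFun_finsetSum_of_notMem hmeas (Finset.notMem_range_self)
    have hIndIW : IndepFun I (W k) μ := by
      have : IndepFun ((fun t => if t ≤ x then (1:ℝ) else 0) ∘ S k)
          ((fun z => min z K) ∘ Z k) μ := by
        refine hIndSZ.comp ?_ ?_
        · exact Measurable.ite measurableSet_Iic measurable_const measurable_const
        · exact measurable_id.min measurable_const
      exact this
    have hIint : Integrable I μ := by
      have : I = (A k).indicator (fun _ => (1:ℝ)) := by
        funext ω
        by_cases h : S k ω ≤ x
        · simp [hI_def, h, hA_def, Set.indicator_of_mem, Set.mem_setOf_eq]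
        · simp [hI_def, h, hA_def, Set.indicator_of_notMem, Set.mem_setOf_eq]
      rw [this]
      exact (integrable_const 1).indicator (hA k)
    have hIeq : (∫ ω, I ω ∂μ) = (μ (A k)).toReal := by
      have : I = (A k).indicator (fun _ => (1:ℝ)) := by
        funext ω
        by_cases h : S k ω ≤ x
        · simp [hI_def, h, hA_def, Set.indicator_of_mem, Set.mem_setOf_eq]
        · simp [hI_def, h, hA_def, Set.indicator_of_notMem, Set.mem_setOf_eq]
      rw [this, integral_indicator_const (1:ℝ) (hA k), smul_eq_mul, mul_one, measureReal_def]
    calc (∫ ω, f k ω ∂μ) = ∫ ω, (I * W k) ω ∂μ := by rw [hfIW]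
      _ = (∫ ω, I ω ∂μ) * (∫ ω, W k ω ∂μ) :=
          hIndIW.integral_mul_eq_mul_integral hIint.aestronglyMeasurable (hWint k).aestronglyMeasurable
      _ = (μ (A k)).toReal * mbar := by rw [hIeq, hWeq]
  -- pointwise sum bound
  have hpsum : ∀ n ω, (∑ k ∈ Finset.range n, f k ω) ≤ min (S n ω) (x + K) := by
    intro n ω
    induction n with
    | zero =>
        simp only [Finset.range_zero, Finset.sum_empty]
        refine le_min ?_ (by linarith)
        rw [hS]; simp
    | succ n ih =>
        rw [Finset.sum_range_succ]
        have hSsucc : S (n + 1) ω = S n ω + Z n ω := by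
          rw [hS, hS, Finset.sum_range_succ]
        by_cases h : S n ω ≤ x
        · have hfne : f n ω = W n ω := Set.indicator_of_mem (show ω ∈ A n from h) _
          have h1 : (∑ k ∈ Finset.range n, f k ω) ≤ S n ω :=
            le_trans ih (min_le_left _ _)
          refine le_min ?_ ?_
          · rw [hSsucc, hfne]
            have := min_le_left (Z n ω) K
            linarith
          · rw [hfne]
            have := min_le_right (Z n ω) K
            linarith
        · have hfne : f n ω = 0 := Set.indicator_of_notMem (show ω ∉ A n from h) _
          rw [hfne, add_zero]
          refine le_trans ih (min_le_min ?_ le_rfl)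
          exact hSmono ω (Nat.le_succ n)
  -- partial sums of measures
  have hpartial : ∀ n, (∑ k ∈ Finset.range n, (μ (A k)).toReal) ≤ (x + K) / mbar := by
    intro n
    rw [le_div_iff₀ hmbar_pos]
    have hsum_int : Integrable (fun ω => ∑ k ∈ Finset.range n, f k ω) μ :=
      integrable_finset_sum _ (fun k _ => hfint k)
    have h1 : (∫ ω, (∑ k ∈ Finset.range n, f k ω) ∂μ) ≤ ∫ _ω, (x + K) ∂μ := by
      refine integral_mono hsum_int (integrable_const _) ?_
      intro ω
      exact le_trans (hpsum n ω) (min_le_right _ _)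
    rw [integral_const, smul_eq_mul, measureReal_def, measure_univ, ENNReal.toReal_one, one_mul] at h1
    rw [integral_finset_sum _ (fun k _ => hfint k)] at h1
    simp_rw [hfint_eq] at h1
    rw [← Finset.sum_mul] at h1
    exact h1
  -- tsum bound
  have htsum : (∑' k : ℕ, μ (A k)) ≤ ENNReal.ofReal ((x + K) / mbar) := by
    rw [ENNReal.tsum_eq_iSup_sum]
    refine iSup_le fun s => ?_
    obtain ⟨n, hn⟩ := s.exists_nat_subset_range
    calc (∑ k ∈ s, μ (A k)) ≤ ∑ k ∈ Finset.range n, μ (A k) :=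
          Finset.sum_le_sum_of_subset hn
      _ = ENNReal.ofReal (∑ k ∈ Finset.range n, (μ (A k)).toReal) := by
          rw [ENNReal.ofReal_sum_of_nonneg (fun k _ => ENNReal.toReal_nonneg)]
          refine Finset.sum_congr rfl fun k _ => ?_
          rw [ENNReal.ofReal_toReal (measure_ne_top μ _)]
      _ ≤ ENNReal.ofReal ((x + K) / mbar) := ENNReal.ofReal_le_ofReal (hpartial n)
  -- bound the lintegral of τ by the tsum
  have hlin : (∫⁻ ω, (τ x ω : ℝ≥0∞) ∂μ) ≤ ∑' k : ℕ, μ (A k) := by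
    have hpt : ∀ ω, (τ x ω : ℝ≥0∞)
        = ∑' k : ℕ, (if k < τ x ω then (1:ℝ≥0∞) else 0) := by
      intro ω
      rw [tsum_eq_sum (s := Finset.range (τ x ω))
        (by intro b hb; simp only [Finset.mem_range, not_lt] at hb
            simp [Nat.not_lt.mpr hb])]
      have hall : ∀ k ∈ Finset.range (τ x ω), (if k < τ x ω then (1:ℝ≥0∞) else 0) = 1 := by
        intro k hk; simp [Finset.mem_range.mp hk]
      rw [Finset.sum_congr rfl hall, Finset.sum_const, Finset.card_range, nsmul_eq_mul, mul_one]
    calc (∫⁻ ω, (τ x ω : ℝ≥0∞) ∂μ)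
        = ∫⁻ ω, ∑' k : ℕ, (if k < τ x ω then (1:ℝ≥0∞) else 0) ∂μ :=
          lintegral_congr hpt
      _ ≤ ∫⁻ ω, ∑' k : ℕ, (A k).indicator (fun _ => (1:ℝ≥0∞)) ω ∂μ := by
          refine lintegral_mono fun ω => ENNReal.tsum_le_tsum fun k => ?_
          by_cases h : k < τ x ω
          · have hmem : ω ∈ A k := hkey k ω h
            simp [h, Set.indicator_of_mem hmem]
          · simp [h]
      _ = ∑' k : ℕ, ∫⁻ ω, (A k).indicator (fun _ => (1:ℝ≥0∞)) ω ∂μ :=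
          lintegral_tsum fun k =>
            ((measurable_const (a := (1:ℝ≥0∞))).indicator (hA k)).aemeasurable
      _ = ∑' k : ℕ, μ (A k) := by
          refine tsum_congr fun k => ?_
          rw [lintegral_indicator (hA k)]
          simp
  -- final arithmetic
  refine le_trans hlin (le_trans htsum (ENNReal.ofReal_le_ofReal ?_))
  have hT : (0:ℝ) ≤ 2 * K / m₁ + 8 * K * x / m₁ ^ 2 + 1 := by positivity
  rw [div_le_iff₀ hmbar_pos]
  have h34 : x + K ≤ (2 * K / m₁ + 8 * K * x / m₁ ^ 2 + 1) * (3 * m₁ / 4) := by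
    have hm : m₁ ≠ 0 := ne_of_gt hm₁pos
    rw [div_add_div _ _ hm (by positivity : m₁ ^ 2 ≠ 0)]
    have key : 4 * (x + K) * m₁ ^ 2 ≤ (2 * K * m₁ ^ 2 + 8 * K * x * m₁ + m₁ ^ 3) * 3 := by
      nlinarith [mul_nonneg (mul_nonneg hx hm₁pos.le) (by linarith : (0:ℝ) ≤ 6 * K - m₁),
        sq_nonneg m₁, mul_pos hm₁pos hm₁pos]
    have hm2 : (0:ℝ) < m₁ ^ 2 := by positivity
    rw [div_add' _ _ _ (by positivity : m₁ * m₁ ^ 2 ≠ 0)]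
    rw [div_mul_eq_mul_div, le_div_iff₀ (by positivity : (0:ℝ) < m₁ * m₁ ^ 2)]
    nlinarith [key, hm₁pos, sq_nonneg m₁]
  calc x + K ≤ (2 * K / m₁ + 8 * K * x / m₁ ^ 2 + 1) * (3 * m₁ / 4) := h34
    _ ≤ (2 * K / m₁ + 8 * K * x / m₁ ^ 2 + 1) * mbar :=
        mul_le_mul_of_nonneg_left hmbar_ge hT
end

section
/- Suppose (a) for every c > 0, limsup_{x→−∞} w(x−c)/w(x) < ∞, and (b) limsup_{n→∞} E[ ∫ |x|(1 + w(x)) μ_n(dx) ] < ∞. Then for every ε > 0 and c > 0: lim_{A→∞} limsup_{n→∞} P[ ∫_{(−∞,−A)} w(x−c) μ_n(dx) ≥ ε ] = 0. -/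
open MeasureTheory Filter Set
open scoped ENNReal

/-- Remark 2.4 of the paper: if (a) for every `c > 0` the ratio
`w(x-c)/w(x)` is bounded near `-∞`, and (b) the expectations
`E[∫ |x|(1+w(x)) μ_n(dx)]` are bounded along `n → ∞`, then for every `ε, c > 0`,
`lim_{A→∞} limsup_{n→∞} P[∫_{(-∞,-A)} w(x-c) μ_n(dx) ≥ ε] = 0`. -/
theorem left_tail_condition_from_moment_bound
    {Ω : Type*} [MeasurableSpace Ω] (P : Measure Ω) [IsProbabilityMeasure P]
    (w : ℝ → ℝ) (hwpos : ∀ x, 0 < w x) (hwmono : Antitone w)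
    (μn : ℕ → Ω → Measure ℝ)
    (hprob : ∀ n ω, IsProbabilityMeasure (μn n ω))
    (hker : ∀ n, ∀ s : Set ℝ, MeasurableSet s → Measurable (fun ω => μn n ω s))
    (ha : ∀ c > (0:ℝ), ∃ M : ℝ, ∀ᶠ x in atBot, w (x - c) / w x ≤ M)
    (hb : Filter.limsup (fun n =>
        ∫⁻ ω, (∫⁻ x, ENNReal.ofReal (|x| * (1 + w x)) ∂(μn n ω)) ∂P) atTop < ⊤)
    (ε c : ℝ) (hε : 0 < ε) (hc : 0 < c) :
    Tendsto (fun A : ℝ => Filter.limsup (fun n =>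
        P {ω | ENNReal.ofReal ε
            ≤ ∫⁻ x in Set.Iio (-A), ENNReal.ofReal (w (x - c)) ∂(μn n ω)}) atTop)
      atTop (nhds 0) := by
  classical
  -- notation for the expectations in (b)
  set E : ℕ → ℝ≥0∞ := fun n =>
      ∫⁻ ω, (∫⁻ x, ENNReal.ofReal (|x| * (1 + w x)) ∂(μn n ω)) ∂P with hE
  set C : ℝ≥0∞ := Filter.limsup E atTop with hC
  have hC_lt : C < ⊤ := hb
  -- eventually E n ≤ C + 1
  have hEev : ∀ᶠ n in atTop, E n ≤ C + 1 := by
    filter_upwards [eventually_lt_of_limsup_lt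
      (ENNReal.lt_add_right hC_lt.ne one_ne_zero)] with n hn using hn.le
  -- constant from (a)
  obtain ⟨M, hM⟩ := ha c hc
  set M' : ℝ := max M 1 with hM'
  have hM'pos : (0:ℝ) < M' := lt_of_lt_of_le one_pos (le_max_right _ _)
  obtain ⟨x₀, hx₀⟩ := eventually_atBot.1 hM
  have hMb : ∀ x ≤ x₀, w (x - c) ≤ M' * w x := by
    intro x hx
    have h1 := (hx₀ x hx).trans (le_max_left M 1)
    have := (div_le_iff₀ (hwpos x)).1 h1
    linarith
  set A₀ : ℝ := max (-x₀) 1 with hA₀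
  -- measurability of the inner integrand
  have hwmeas : Measurable w := hwmono.measurable
  have hfmeas : Measurable fun x : ℝ => ENNReal.ofReal (|x| * (1 + w x)) :=
    (measurable_abs.mul (measurable_const.add hwmeas)).ennreal_ofReal
  -- kernels
  have hκmeas : ∀ n, Measurable (μn n) := fun n =>
    Measure.measurable_of_measurable_coe _ (hker n)
  -- key bound : for A ≥ A₀ and every n,
  -- limsup_n P{...} ≤ ofReal (M'/A) * (ofReal ε)⁻¹ * (C+1)
  set k : ℝ → ℝ≥0∞ := fun A => ENNReal.ofReal (M' / A) * (ENNReal.ofReal ε)⁻¹ with hk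
  have key : ∀ A ≥ A₀, Filter.limsup (fun n =>
      P {ω | ENNReal.ofReal ε
          ≤ ∫⁻ x in Set.Iio (-A), ENNReal.ofReal (w (x - c)) ∂(μn n ω)}) atTop
      ≤ k A * (C + 1) := by
    intro A hA
    have hA1 : (1:ℝ) ≤ A := le_trans (le_max_right _ _) hA
    have hApos : (0:ℝ) < A := lt_of_lt_of_le one_pos hA1
    -- pointwise bound on Iio (-A)
    have hpt : ∀ x ∈ Set.Iio (-A), ENNReal.ofReal (w (x - c))
        ≤ ENNReal.ofReal (M' / A) * ENNReal.ofReal (|x| * (1 + w x)) := by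
      intro x hx
      rw [Set.mem_Iio] at hx
      have hxx₀ : x ≤ x₀ := by
        have : -A ≤ x₀ := by
          have := le_max_left (-x₀) 1
          linarith [le_trans (le_max_left (-x₀) 1) hA]
        linarith
      have h1 : w (x - c) ≤ M' * w x := hMb x hxx₀
      have hxneg : x < 0 := by linarith
      have habs : |x| = -x := abs_of_neg hxneg
      have h2 : w x ≤ (|x| / A) * (1 + w x) := by
        have hwx := hwpos x
        have hge : (1:ℝ) ≤ |x| / A := by
          rw [le_div_iff₀ hApos, habs]; linarith
        nlinarith
      have h3 : w (x - c) ≤ (M' / A) * (|x| * (1 + w x)) := by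
        have := mul_le_mul_of_nonneg_left h2 hM'pos.le
        calc w (x - c) ≤ M' * w x := h1
          _ ≤ M' * ((|x| / A) * (1 + w x)) := this
          _ = (M' / A) * (|x| * (1 + w x)) := by ring
      calc ENNReal.ofReal (w (x - c)) ≤ ENNReal.ofReal ((M' / A) * (|x| * (1 + w x))) :=
            ENNReal.ofReal_le_ofReal h3
        _ = ENNReal.ofReal (M' / A) * ENNReal.ofReal (|x| * (1 + w x)) :=
            ENNReal.ofReal_mul (by positivity)
    -- integral bound for each n, ω
    have hint : ∀ n ω, (∫⁻ x in Set.Iio (-A), ENNReal.ofReal (w (x - c)) ∂(μn n ω))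
        ≤ ENNReal.ofReal (M' / A) * ∫⁻ x, ENNReal.ofReal (|x| * (1 + w x)) ∂(μn n ω) := by
      intro n ω
      calc (∫⁻ x in Set.Iio (-A), ENNReal.ofReal (w (x - c)) ∂(μn n ω))
          ≤ ∫⁻ x in Set.Iio (-A),
              ENNReal.ofReal (M' / A) * ENNReal.ofReal (|x| * (1 + w x)) ∂(μn n ω) :=
            setLIntegral_mono (measurable_const.mul hfmeas) hpt
        _ ≤ ∫⁻ x, ENNReal.ofReal (M' / A) * ENNReal.ofReal (|x| * (1 + w x)) ∂(μn n ω) :=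
            setLIntegral_le_lintegral _ _
        _ = ENNReal.ofReal (M' / A) * ∫⁻ x, ENNReal.ofReal (|x| * (1 + w x)) ∂(μn n ω) :=
            lintegral_const_mul _ hfmeas
    -- measurability of ω ↦ ∫⁻ ...
    have hXmeas : ∀ n, Measurable fun ω =>
        ∫⁻ x in Set.Iio (-A), ENNReal.ofReal (w (x - c)) ∂(μn n ω) := by
      intro n
      have hg : Measurable fun x : ℝ =>
          (Set.Iio (-A)).indicator (fun x => ENNReal.ofReal (w (x - c))) x :=
        ((hwmono.measurable.comp (measurable_id.sub measurable_const)).ennreal_ofReal).indicator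
          measurableSet_Iio
      have : (fun ω => ∫⁻ x in Set.Iio (-A), ENNReal.ofReal (w (x - c)) ∂(μn n ω))
          = fun ω => ∫⁻ x, (Set.Iio (-A)).indicator
              (fun x => ENNReal.ofReal (w (x - c))) x ∂(μn n ω) := by
        ext ω; rw [lintegral_indicator measurableSet_Iio]
      rw [this]
      let κ : ProbabilityTheory.Kernel Ω ℝ := ⟨μn n, hκmeas n⟩
      have : ProbabilityTheory.IsMarkovKernel κ := ⟨fun ω => hprob n ω⟩
      exact Measurable.lintegral_kernel (κ := κ) hg
    -- Markov for each n
    have hMarkov : ∀ n, P {ω | ENNReal.ofReal ε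
        ≤ ∫⁻ x in Set.Iio (-A), ENNReal.ofReal (w (x - c)) ∂(μn n ω)} ≤ k A * E n := by
      intro n
      have hεne : ENNReal.ofReal ε ≠ 0 := by
        simp [ENNReal.ofReal_eq_zero, not_le, hε]
      have h1 := mul_meas_ge_le_lintegral (μ := P) (hXmeas n) (ENNReal.ofReal ε)
      have h2 : (∫⁻ ω, (∫⁻ x in Set.Iio (-A),
            ENNReal.ofReal (w (x - c)) ∂(μn n ω)) ∂P)
          ≤ ENNReal.ofReal (M' / A) * E n := by
        rw [hE]
        calc _ ≤ ∫⁻ ω, ENNReal.ofReal (M' / A)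
              * ∫⁻ x, ENNReal.ofReal (|x| * (1 + w x)) ∂(μn n ω) ∂P :=
              lintegral_mono fun ω => hint n ω
          _ = _ := lintegral_const_mul' _ _ ENNReal.ofReal_ne_top
      have h3 : ENNReal.ofReal ε * P {ω | ENNReal.ofReal ε
          ≤ ∫⁻ x in Set.Iio (-A), ENNReal.ofReal (w (x - c)) ∂(μn n ω)}
          ≤ ENNReal.ofReal (M' / A) * E n := le_trans h1 h2
      calc P {ω | ENNReal.ofReal ε
            ≤ ∫⁻ x in Set.Iio (-A), ENNReal.ofReal (w (x - c)) ∂(μn n ω)}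
          = (ENNReal.ofReal ε)⁻¹ * (ENNReal.ofReal ε * P _) := by
            rw [← mul_assoc, ENNReal.inv_mul_cancel hεne ENNReal.ofReal_ne_top, one_mul]
        _ ≤ (ENNReal.ofReal ε)⁻¹ * (ENNReal.ofReal (M' / A) * E n) :=
            mul_le_mul_right h3 _
        _ = k A * E n := by rw [hk]; ring
    refine Filter.limsup_le_of_le (by isBoundedDefault) ?_
    filter_upwards [hEev] with n hn
    exact le_trans (hMarkov n) (mul_le_mul_right hn _)
  -- the bound tends to 0
  have hklim : Tendsto (fun A => k A * (C + 1)) atTop (nhds 0) := by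
    have h1 : Tendsto (fun A : ℝ => M' / A) atTop (nhds 0) :=
      Tendsto.div_atTop tendsto_const_nhds tendsto_id
    have h2 : Tendsto (fun A : ℝ => ENNReal.ofReal (M' / A)) atTop (nhds 0) := by
      simpa using (ENNReal.tendsto_ofReal h1)
    have h3 : Tendsto (fun A : ℝ => ENNReal.ofReal (M' / A)
        * ((ENNReal.ofReal ε)⁻¹ * (C + 1))) atTop (nhds 0) := by
      have hfin : (ENNReal.ofReal ε)⁻¹ * (C + 1) ≠ ⊤ := by
        refine ENNReal.mul_ne_top ?_ ?_
        · simp [ENNReal.inv_ne_top, ENNReal.ofReal_eq_zero, not_le, hε]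
        · exact ENNReal.add_ne_top.2 ⟨hC_lt.ne, ENNReal.one_ne_top⟩
      simpa using ENNReal.Tendsto.mul_const h2 (Or.inr hfin)
    convert h3 using 2 with A
    rw [hk]; ring
  -- squeeze
  refine tendsto_of_tendsto_of_tendsto_of_le_of_le' tendsto_const_nhds hklim ?_ ?_
  · exact Eventually.of_forall fun A => zero_le
  · filter_upwards [eventually_ge_atTop A₀] with A hA using key A hA
end

section
/- Let w : ℝ → (0,∞) be a nonincreasing function, let n ≥ 1 be an integer and y ∈ ℝⁿ with Σ_{i=1}^n y_i = 0. Let δ > 0 and B > 0 satisfy w(B) ≥ 2δ. If (1/n) Σ_{i=1}^n w(y_i) < δ, then (1/n) Σ_{i=1}^n |y_i| ≥ B. -/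
open Finset

/-- for a centered configuration, if the average jump rate
`(1/n) Σ w(y_i)` is below `δ` and `w(B) ≥ 2δ`, then the average absolute
displacement `(1/n) Σ |y_i|` is at least `B`. -/
theorem small_average_rate_implies_spread
    (w : ℝ → ℝ) (hwpos : ∀ x, 0 < w x) (hwmono : Antitone w)
    (n : ℕ) (hn : 1 ≤ n)
    (y : Fin n → ℝ) (hsum : ∑ i, y i = 0)
    (δ B : ℝ) (hδ : 0 < δ) (hB : 0 < B) (hwB : 2 * δ ≤ w B)
    (havg : (1 / (n : ℝ)) * ∑ i, w (y i) < δ) :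
    B ≤ (1 / (n : ℝ)) * ∑ i, |y i| := by
  have hn0 : (0 : ℝ) < n := by exact_mod_cast hn
  set S := univ.filter (fun i : Fin n => B < y i) with hS
  set T := univ.filter (fun i : Fin n => ¬ B < y i) with hT
  -- sum of w over all < n δ
  have hsumw : ∑ i, w (y i) < n * δ := by
    have h := (inv_mul_lt_iff₀ hn0).mp (by simpa [one_div] using havg)
    linarith [h]
  -- each i in T has w (y i) ≥ 2δ
  have hTbound : (T.card : ℝ) * (2 * δ) ≤ ∑ i ∈ T, w (y i) := by
    have : ∀ i ∈ T, 2 * δ ≤ w (y i) := by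
      intro i hi
      have hyi : y i ≤ B := le_of_not_gt (by simpa [hT] using (mem_filter.mp hi).2)
      exact hwB.trans (hwmono hyi)
    calc (T.card : ℝ) * (2 * δ) = ∑ _i ∈ T, 2 * δ := by simp [mul_comm]
      _ ≤ ∑ i ∈ T, w (y i) := Finset.sum_le_sum this
  have hTsum_le : ∑ i ∈ T, w (y i) ≤ ∑ i, w (y i) :=
    Finset.sum_le_sum_of_subset_of_nonneg (Finset.subset_univ T)
      (fun i _ _ => (hwpos _).le)
  have hTcard : (T.card : ℝ) * 2 * δ < n * δ := by
    nlinarith [hTbound, hTsum_le, hsumw]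
  have hTcard' : 2 * (T.card : ℝ) < n := by
    have := (mul_lt_mul_iff_of_pos_right hδ).mp (by linarith [hTcard] : (T.card : ℝ) * 2 * δ < n * δ)
    linarith
  have hcards : S.card + T.card = n := by
    have := Finset.card_filter_add_card_filter_not (s := univ)
      (p := fun i : Fin n => B < y i)
    simpa [hS, hT] using this
  have hScard : (n : ℝ) < 2 * S.card := by
    have : (S.card : ℝ) + T.card = n := by exact_mod_cast hcards
    linarith
  -- sum over S of y ≥ S.card * B
  have hSy : (S.card : ℝ) * B ≤ ∑ i ∈ S, y i := by
    calc (S.card : ℝ) * B = ∑ _i ∈ S, B := by simp [mul_comm]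
      _ ≤ ∑ i ∈ S, y i := Finset.sum_le_sum (fun i hi => (mem_filter.mp hi).2.le)
  -- sum over T of y = - sum over S of y
  have hsplit : ∑ i ∈ S, y i + ∑ i ∈ T, y i = 0 := by
    rw [hS, hT, Finset.sum_filter_add_sum_filter_not]; exact hsum
  have habs : 2 * ∑ i ∈ S, y i ≤ ∑ i, |y i| := by
    have h1 : ∑ i ∈ S, y i ≤ ∑ i ∈ S, |y i| :=
      Finset.sum_le_sum (fun i _ => le_abs_self _)
    have h2 : -∑ i ∈ T, y i ≤ ∑ i ∈ T, |y i| := by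
      rw [← Finset.sum_neg_distrib]
      exact Finset.sum_le_sum (fun i _ => neg_le_abs _)
    have h3 : ∑ i ∈ S, |y i| + ∑ i ∈ T, |y i| = ∑ i, |y i| := by
      rw [hS, hT, Finset.sum_filter_add_sum_filter_not]
    linarith
  have hfinal : (n : ℝ) * B ≤ ∑ i, |y i| := by
    nlinarith [hSy, habs, hScard, hB.le]
  rw [one_div, inv_mul_eq_div, le_div_iff₀ hn0]
  linarith [hfinal]
end
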